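/- arXiv:1505.02308 — 5 statements merged into one kernel-verified Lean document; each statement's English description precedes it below -/
import Mathlib

section
/- Let b_m denote the number of permutations of [m] all of whose peaks and valleys are even. Then for all n ≥ 0, b_{2n+1} = (2n+1)·b_{2n}. -/
/-- Position `i` (1-indexed, `2 ≤ i ≤ n-1`) is a peak of `π`: `π(i-1) < π(i) > π(i+1)`. -/
def IsPeak {n : ℕ} (π : Equiv.Perm (Fin n)) (i : ℕ) : Prop :=
  ∃ h : 2 ≤ i ∧ i + 1 ≤ n,
    π ⟨i - 2, by omega⟩ < π ⟨i - 1, by omega⟩ ∧ π ⟨i, by omega⟩ < π ⟨i - 1, by omega⟩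

/-- Position `i` (1-indexed, `2 ≤ i ≤ n-1`) is a valley of `π`: `π(i-1) > π(i) < π(i+1)`. -/
def IsValley {n : ℕ} (π : Equiv.Perm (Fin n)) (i : ℕ) : Prop :=
  ∃ h : 2 ≤ i ∧ i + 1 ≤ n,
    π ⟨i - 1, by omega⟩ < π ⟨i - 2, by omega⟩ ∧ π ⟨i - 1, by omega⟩ < π ⟨i, by omega⟩

/-- `b m` is the number of permutations of `[m]` with all peaks and valleys even. -/
noncomputable def evenPV (m : ℕ) : ℕ :=
  Nat.card {π : Equiv.Perm (Fin m) //
    (∀ i, IsPeak π i → Even i) ∧ (∀ i, IsValley π i → Even i)}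

/-- Insert value `v` at the last position of (the word of) `σ`. -/
def ins {m : ℕ} (v : Fin (m + 1)) (σ : Equiv.Perm (Fin m)) : Equiv.Perm (Fin (m + 1)) :=
  finSuccEquivLast.trans (σ.optionCongr.trans (finSuccEquiv' v).symm)

lemma ins_castSucc {m : ℕ} (v : Fin (m + 1)) (σ : Equiv.Perm (Fin m)) (j : Fin m) :
    ins v σ j.castSucc = v.succAbove (σ j) := by
  simp [ins, finSuccEquivLast_castSucc, finSuccEquiv'_symm_some]

lemma ins_last {m : ℕ} (v : Fin (m + 1)) (σ : Equiv.Perm (Fin m)) :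
    ins v σ (Fin.last m) = v := by
  simp [ins, finSuccEquivLast_last, finSuccEquiv'_symm_none]

lemma ins_mk {m : ℕ} (v : Fin (m + 1)) (σ : Equiv.Perm (Fin m)) (k : ℕ) (hk : k < m) :
    ins v σ ⟨k, by omega⟩ = v.succAbove (σ ⟨k, hk⟩) := by
  have : (⟨k, by omega⟩ : Fin (m + 1)) = Fin.castSucc ⟨k, hk⟩ := rfl
  rw [this, ins_castSucc]

lemma ins_injective {m : ℕ} : Function.Injective
    (fun p : Fin (m + 1) × Equiv.Perm (Fin m) => ins p.1 p.2) := by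
  rintro ⟨v, σ⟩ ⟨v', σ'⟩ h
  simp only at h
  have hv : v = v' := by
    have := congrArg (fun e => e (Fin.last m)) h
    simpa [ins_last] using this
  subst hv
  have hσ : σ = σ' := by
    ext j
    have := congrArg (fun e => e j.castSucc) h
    simp only [ins_castSucc] at this
    exact congrArg Fin.val (Fin.succAbove_right_injective this)
  simp [hσ]

lemma ins_surjective {m : ℕ} : Function.Surjective
    (fun p : Fin (m + 1) × Equiv.Perm (Fin m) => ins p.1 p.2) := by
  intro π
  set v := π (Fin.last m) with hv
  set c : Option (Fin m) ≃ Option (Fin m) :=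
    finSuccEquivLast.symm.trans (π.trans (finSuccEquiv' v)) with hc
  refine ⟨⟨v, Equiv.removeNone c⟩, ?_⟩
  ext x
  refine Fin.lastCases ?_ (fun j => ?_) x
  · simp [ins_last, hv]
  · rw [ins_castSucc]
    have hne : π j.castSucc ≠ v := by
      intro h
      exact absurd (π.injective h) (by simp [Fin.ext_iff]; omega)
    obtain ⟨k, hk⟩ := Fin.exists_succAbove_eq hne
    have hck : c (some j) = some k := by
      simp [hc, ← hk, finSuccEquiv'_succAbove]
    have := Equiv.removeNone_some c ⟨k, hck⟩
    rw [hck] at this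
    rw [show Equiv.removeNone c j = k from Option.some_injective _ this, hk]

lemma isPeak_ins_iff {m : ℕ} (v : Fin (m + 1)) (σ : Equiv.Perm (Fin m)) {i : ℕ}
    (h2 : 2 ≤ i) (hm : i + 1 ≤ m) : IsPeak (ins v σ) i ↔ IsPeak σ i := by
  constructor
  · rintro ⟨hh, ha, hb⟩
    refine ⟨⟨h2, hm⟩, ?_, ?_⟩
    · rw [← Fin.succAbove_lt_succAbove_iff (p := v), ← ins_mk v σ _ (by omega),
        ← ins_mk v σ _ (by omega)]
      exact ha
    · rw [← Fin.succAbove_lt_succAbove_iff (p := v), ← ins_mk v σ _ (by omega),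
        ← ins_mk v σ _ (by omega)]
      exact hb
  · rintro ⟨hh, ha, hb⟩
    refine ⟨⟨h2, by omega⟩, ?_, ?_⟩
    · rw [ins_mk v σ _ (by omega), ins_mk v σ _ (by omega),
        Fin.succAbove_lt_succAbove_iff]
      exact ha
    · rw [ins_mk v σ _ (by omega), ins_mk v σ _ (by omega),
        Fin.succAbove_lt_succAbove_iff]
      exact hb

lemma isValley_ins_iff {m : ℕ} (v : Fin (m + 1)) (σ : Equiv.Perm (Fin m)) {i : ℕ}
    (h2 : 2 ≤ i) (hm : i + 1 ≤ m) : IsValley (ins v σ) i ↔ IsValley σ i := by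
  constructor
  · rintro ⟨hh, ha, hb⟩
    refine ⟨⟨h2, hm⟩, ?_, ?_⟩
    · rw [← Fin.succAbove_lt_succAbove_iff (p := v), ← ins_mk v σ _ (by omega),
        ← ins_mk v σ _ (by omega)]
      exact ha
    · rw [← Fin.succAbove_lt_succAbove_iff (p := v), ← ins_mk v σ _ (by omega),
        ← ins_mk v σ _ (by omega)]
      exact hb
  · rintro ⟨hh, ha, hb⟩
    refine ⟨⟨h2, by omega⟩, ?_, ?_⟩
    · rw [ins_mk v σ _ (by omega), ins_mk v σ _ (by omega),
        Fin.succAbove_lt_succAbove_iff]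
      exact ha
    · rw [ins_mk v σ _ (by omega), ins_mk v σ _ (by omega),
        Fin.succAbove_lt_succAbove_iff]
      exact hb

lemma good_ins_iff {n : ℕ} (v : Fin (2 * n + 1)) (σ : Equiv.Perm (Fin (2 * n))) :
    ((∀ i, IsPeak (ins v σ) i → Even i) ∧ (∀ i, IsValley (ins v σ) i → Even i)) ↔
    ((∀ i, IsPeak σ i → Even i) ∧ (∀ i, IsValley σ i → Even i)) := by
  constructor
  · rintro ⟨hp, hv⟩
    constructor
    · intro i hi
      obtain ⟨⟨h2, hm⟩, -⟩ := id hi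
      exact hp i ((isPeak_ins_iff v σ h2 hm).mpr hi)
    · intro i hi
      obtain ⟨⟨h2, hm⟩, -⟩ := id hi
      exact hv i ((isValley_ins_iff v σ h2 hm).mpr hi)
  · rintro ⟨hp, hv⟩
    constructor
    · intro i hi
      obtain ⟨⟨h2, hm⟩, -⟩ := id hi
      rcases Nat.lt_or_ge (i + 1) (2 * n + 1) with h | h
      · exact hp i ((isPeak_ins_iff v σ h2 (by omega)).mp hi)
      · have : i = 2 * n := by omega
        exact this ▸ ⟨n, by ring⟩
    · intro i hi
      obtain ⟨⟨h2, hm⟩, -⟩ := id hi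
      rcases Nat.lt_or_ge (i + 1) (2 * n + 1) with h | h
      · exact hv i ((isValley_ins_iff v σ h2 (by omega)).mp hi)
      · have : i = 2 * n := by omega
        exact this ▸ ⟨n, by ring⟩

theorem stmt4 (n : ℕ) : evenPV (2 * n + 1) = (2 * n + 1) * evenPV (2 * n) := by
  classical
  set Good : Equiv.Perm (Fin (2 * n + 1)) → Prop :=
    fun π => (∀ i, IsPeak π i → Even i) ∧ (∀ i, IsValley π i → Even i) with hG
  set Good' : Equiv.Perm (Fin (2 * n)) → Prop :=
    fun σ => (∀ i, IsPeak σ i → Even i) ∧ (∀ i, IsValley σ i → Even i) with hG'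
  have key : Function.Bijective
      (fun p : Fin (2 * n + 1) × {σ : Equiv.Perm (Fin (2 * n)) // Good' σ} =>
        (⟨ins p.1 p.2.1, (good_ins_iff p.1 p.2.1).mpr p.2.2⟩ :
          {π : Equiv.Perm (Fin (2 * n + 1)) // Good π})) := by
    constructor
    · rintro ⟨v, σ, hσ⟩ ⟨v', σ', hσ'⟩ h
      have := ins_injective (m := 2 * n) (a₁ := (v, σ)) (a₂ := (v', σ'))
        (by simpa using congrArg Subtype.val h)
      simp only [Prod.mk.injEq] at this
      exact Prod.ext this.1 (Subtype.ext this.2)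
    · rintro ⟨π, hπ⟩
      obtain ⟨⟨v, σ⟩, hvs⟩ := ins_surjective (m := 2 * n) π
      simp only at hvs
      refine ⟨⟨v, σ, ?_⟩, Subtype.ext hvs⟩
      exact (good_ins_iff v σ).mp (hvs ▸ hπ)
  have h1 : Nat.card {π : Equiv.Perm (Fin (2 * n + 1)) // Good π}
      = (2 * n + 1) * Nat.card {σ : Equiv.Perm (Fin (2 * n)) // Good' σ} := by
    rw [← Nat.card_eq_of_bijective _ key, Nat.card_prod,
      Nat.card_eq_fintype_card (α := Fin (2 * n + 1)), Fintype.card_fin]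
  exact h1
end

section
/- Let c_m denote the number of permutations of [m] all of whose peaks and valleys are odd. Then for all n ≥ 1, c_{2n} = 2n·c_{2n−1}. -/
/-- `c m` is the number of permutations of `[m]` with all peaks and valleys odd. -/
noncomputable def oddPV (m : ℕ) : ℕ :=
  Nat.card {π : Equiv.Perm (Fin m) //
    (∀ i, IsPeak π i → Odd i) ∧ (∀ i, IsValley π i → Odd i)}

namespace OddPVAux

/-- Build a permutation of `Fin (m+1)` from a value `k` at the last position and a
permutation `σ` of `Fin m` giving the relative order of the first `m` positions. -/
def toPerm {m : ℕ} (k : Fin (m + 1)) (σ : Equiv.Perm (Fin m)) : Equiv.Perm (Fin (m + 1)) :=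
  finSuccEquivLast.trans (σ.optionCongr.trans (finSuccEquiv' k).symm)

@[simp] lemma toPerm_last {m : ℕ} (k : Fin (m + 1)) (σ : Equiv.Perm (Fin m)) :
    toPerm k σ (Fin.last m) = k := by
  simp [toPerm]

@[simp] lemma toPerm_castSucc {m : ℕ} (k : Fin (m + 1)) (σ : Equiv.Perm (Fin m)) (j : Fin m) :
    toPerm k σ (Fin.castSucc j) = k.succAbove (σ j) := by
  simp [toPerm, finSuccEquiv'_symm_some]

lemma toPerm_bijective {m : ℕ} :
    Function.Bijective (fun p : Fin (m + 1) × Equiv.Perm (Fin m) => toPerm p.1 p.2) := by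
  constructor
  · rintro ⟨k, σ⟩ ⟨k', σ'⟩ h
    simp only at h
    have hk : k = k' := by
      have := congrArg (fun π : Equiv.Perm (Fin (m+1)) => π (Fin.last m)) h
      simpa using this
    subst hk
    have hσ : σ = σ' := by
      ext j
      have := congrArg (fun π : Equiv.Perm (Fin (m+1)) => π (Fin.castSucc j)) h
      simp only [toPerm_castSucc] at this
      exact congrArg Fin.val (Fin.succAbove_right_injective this)
    simp [hσ]
  · intro π
    set k := π (Fin.last m) with hk
    set e : Option (Fin m) ≃ Option (Fin m) :=
      finSuccEquivLast.symm.trans (π.trans (finSuccEquiv' k)) with he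
    have hnone : e none = none := by
      simp [he, hk, finSuccEquiv'_at]
    refine ⟨⟨k, Equiv.removeNone e⟩, ?_⟩
    apply Equiv.ext
    intro x
    simp only
    induction x using Fin.lastCases with
    | last => simp [hk]
    | cast j =>
      rw [toPerm_castSucc]
      have hsome : ∃ x', e (some j) = some x' := by
        rcases h' : e (some j) with _ | a
        · exfalso
          have := e.injective (h'.trans hnone.symm)
          simp at this
        · exact ⟨a, rfl⟩
      have h2 : some (Equiv.removeNone e j) = e (some j) := Equiv.removeNone_some e hsome
      have h3 : e (some j) = finSuccEquiv' k (π (Fin.castSucc j)) := by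
        simp [he]
      rw [h3] at h2
      have := congrArg (finSuccEquiv' k).symm h2
      rw [Equiv.symm_apply_apply] at this
      rw [← this, finSuccEquiv'_symm_some]

lemma toPerm_lt_iff {m : ℕ} (k : Fin (m + 1)) (σ : Equiv.Perm (Fin m)) {a b : ℕ}
    (ha : a < m) (hb : b < m) :
    toPerm k σ ⟨a, by omega⟩ < toPerm k σ ⟨b, by omega⟩ ↔ σ ⟨a, ha⟩ < σ ⟨b, hb⟩ := by
  rw [show (⟨a, by omega⟩ : Fin (m + 1)) = Fin.castSucc ⟨a, ha⟩ from rfl,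
      show (⟨b, by omega⟩ : Fin (m + 1)) = Fin.castSucc ⟨b, hb⟩ from rfl,
      toPerm_castSucc, toPerm_castSucc, Fin.succAbove_lt_succAbove_iff]

lemma isPeak_toPerm_iff {m : ℕ} (k : Fin (m + 1)) (σ : Equiv.Perm (Fin m)) {i : ℕ}
    (h : i + 1 ≤ m) : IsPeak (toPerm k σ) i ↔ IsPeak σ i := by
  unfold IsPeak
  constructor
  · rintro ⟨⟨h2, hb'⟩, ha, hb⟩
    exact ⟨⟨h2, h⟩, (toPerm_lt_iff k σ (by omega) (by omega)).mp ha,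
      (toPerm_lt_iff k σ (by omega) (by omega)).mp hb⟩
  · rintro ⟨⟨h2, hb'⟩, ha, hb⟩
    exact ⟨⟨h2, by omega⟩, (toPerm_lt_iff k σ (by omega) (by omega)).mpr ha,
      (toPerm_lt_iff k σ (by omega) (by omega)).mpr hb⟩

lemma isValley_toPerm_iff {m : ℕ} (k : Fin (m + 1)) (σ : Equiv.Perm (Fin m)) {i : ℕ}
    (h : i + 1 ≤ m) : IsValley (toPerm k σ) i ↔ IsValley σ i := by
  unfold IsValley
  constructor
  · rintro ⟨⟨h2, hb'⟩, ha, hb⟩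
    exact ⟨⟨h2, h⟩, (toPerm_lt_iff k σ (by omega) (by omega)).mp ha,
      (toPerm_lt_iff k σ (by omega) (by omega)).mp hb⟩
  · rintro ⟨⟨h2, hb'⟩, ha, hb⟩
    exact ⟨⟨h2, by omega⟩, (toPerm_lt_iff k σ (by omega) (by omega)).mpr ha,
      (toPerm_lt_iff k σ (by omega) (by omega)).mpr hb⟩

lemma good_iff {m : ℕ} (hm : Odd m) (k : Fin (m + 1)) (σ : Equiv.Perm (Fin m)) :
    ((∀ i, IsPeak (toPerm k σ) i → Odd i) ∧ (∀ i, IsValley (toPerm k σ) i → Odd i)) ↔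
      ((∀ i, IsPeak σ i → Odd i) ∧ (∀ i, IsValley σ i → Odd i)) := by
  constructor
  · rintro ⟨hp, hv⟩
    refine ⟨fun i hi => ?_, fun i hi => ?_⟩
    · obtain ⟨⟨-, hb⟩, -⟩ := id hi
      exact hp i ((isPeak_toPerm_iff k σ hb).mpr hi)
    · obtain ⟨⟨-, hb⟩, -⟩ := id hi
      exact hv i ((isValley_toPerm_iff k σ hb).mpr hi)
  · rintro ⟨hp, hv⟩
    refine ⟨fun i hi => ?_, fun i hi => ?_⟩
    · obtain ⟨⟨h2, hb⟩, -⟩ := id hi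
      rcases Nat.lt_or_ge (i + 1) (m + 1) with hlt | hge
      · exact hp i ((isPeak_toPerm_iff k σ (by omega)).mp hi)
      · have : i = m := by omega
        exact this ▸ hm
    · obtain ⟨⟨h2, hb⟩, -⟩ := id hi
      rcases Nat.lt_or_ge (i + 1) (m + 1) with hlt | hge
      · exact hv i ((isValley_toPerm_iff k σ (by omega)).mp hi)
      · have : i = m := by omega
        exact this ▸ hm

lemma oddPV_succ {m : ℕ} (hm : Odd m) : oddPV (m + 1) = (m + 1) * oddPV m := by
  unfold oddPV
  let E := Equiv.ofBijective _ (toPerm_bijective (m := m))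
  have e1 : {p : Fin (m + 1) × Equiv.Perm (Fin m) //
        (∀ i, IsPeak p.2 i → Odd i) ∧ (∀ i, IsValley p.2 i → Odd i)} ≃
      {π : Equiv.Perm (Fin (m + 1)) //
        (∀ i, IsPeak π i → Odd i) ∧ (∀ i, IsValley π i → Odd i)} :=
    Equiv.subtypeEquiv E (fun p => (good_iff hm p.1 p.2).symm)
  have e2 : {p : Fin (m + 1) × Equiv.Perm (Fin m) //
        (∀ i, IsPeak p.2 i → Odd i) ∧ (∀ i, IsValley p.2 i → Odd i)} ≃
      Fin (m + 1) × {σ : Equiv.Perm (Fin m) //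
        (∀ i, IsPeak σ i → Odd i) ∧ (∀ i, IsValley σ i → Odd i)} :=
    { toFun := fun x => (x.1.1, ⟨x.1.2, x.2⟩)
      invFun := fun y => ⟨(y.1, y.2.1), y.2.2⟩
      left_inv := fun _ => rfl
      right_inv := fun _ => rfl }
  rw [Nat.card_congr (e1.symm.trans e2), Nat.card_prod, Nat.card_eq_fintype_card,
    Fintype.card_fin]

end OddPVAux

theorem stmt5 (n : ℕ) (hn : 1 ≤ n) : oddPV (2 * n) = 2 * n * oddPV (2 * n - 1) := by
  have hm : Odd (2 * n - 1) := ⟨n - 1, by omega⟩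
  have h := OddPVAux.oddPV_succ hm
  have e : 2 * n - 1 + 1 = 2 * n := by omega
  calc oddPV (2 * n) = oddPV (2 * n - 1 + 1) := by rw [e]
    _ = (2 * n - 1 + 1) * oddPV (2 * n - 1) := h
    _ = 2 * n * oddPV (2 * n - 1) := by rw [e]
end

section
/- For all n ≥ 1, the number of permutations of [2n+1] with all peaks and valleys odd is strictly less than the number of permutations of [2n+1] with all peaks and valleys even. -/
lemma rot_apply {m : ℕ} (j : ℕ) (h : j + 1 < m + 1) :
    finRotate (m+1) ⟨j, by omega⟩ = ⟨j+1, h⟩ := by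
  rw [finRotate_succ_apply]
  apply Fin.ext
  rw [Fin.val_add_one_of_lt (by exact Fin.mk_lt_mk.mpr (by omega))]

lemma rot_last {m : ℕ} : finRotate (m+1) ⟨m, by omega⟩ = ⟨0, by omega⟩ := by
  rw [finRotate_succ_apply]
  have : (⟨m, by omega⟩ : Fin (m+1)) = Fin.last m := rfl
  rw [this, Fin.last_add_one]
  rfl

lemma hmap (n : ℕ) (hn : 1 ≤ n) (π : Equiv.Perm (Fin (2 * n + 1)))
    (hπ : (∀ i, IsPeak π i → Odd i) ∧ (∀ i, IsValley π i → Odd i)) :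
    (∀ i, IsPeak (π * finRotate (2 * n + 1)) i → Even i) ∧
    (∀ i, IsValley (π * finRotate (2 * n + 1)) i → Even i) := by
  have key : ∀ (a b : ℕ) (ha : a + 1 < 2 * n + 1) (hb : b < 2 * n + 1),
      a + 1 = b → (π * finRotate (2 * n + 1)) ⟨a, by omega⟩ = π ⟨b, hb⟩ := by
    intro a b ha hb hab
    rw [Equiv.Perm.mul_apply, rot_apply a (by omega)]
    exact congrArg π (Fin.ext hab)
  constructor
  · rintro i ⟨⟨h2, hle⟩, ha, hb⟩
    by_cases hi : i = 2 * n
    · subst hi; exact even_two_mul n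
    · have hle' : i + 2 ≤ 2 * n + 1 := by omega
      have hp : IsPeak π (i + 1) := by
        refine ⟨⟨by omega, by omega⟩, ?_, ?_⟩
        · rw [key (i-2) (i-1) (by omega) (by omega) (by omega),
            key (i-1) i (by omega) (by omega) (by omega)] at ha
          convert ha using 2 <;> exact Fin.ext (by simp only [Fin.val_mk]; omega) |>.symm
        · rw [key (i-1) i (by omega) (by omega) (by omega),
            key i (i+1) (by omega) (by omega) (by omega)] at hb
          convert hb using 2 <;> exact Fin.ext (by simp only [Fin.val_mk]; omega) |>.symm
      obtain ⟨k, hk⟩ := hπ.1 _ hp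
      exact ⟨k, by omega⟩
  · rintro i ⟨⟨h2, hle⟩, ha, hb⟩
    by_cases hi : i = 2 * n
    · subst hi; exact even_two_mul n
    · have hle' : i + 2 ≤ 2 * n + 1 := by omega
      have hp : IsValley π (i + 1) := by
        refine ⟨⟨by omega, by omega⟩, ?_, ?_⟩
        · rw [key (i-2) (i-1) (by omega) (by omega) (by omega),
            key (i-1) i (by omega) (by omega) (by omega)] at ha
          convert ha using 2 <;> exact Fin.ext (by simp only [Fin.val_mk]; omega) |>.symm
        · rw [key (i-1) i (by omega) (by omega) (by omega),
            key i (i+1) (by omega) (by omega) (by omega)] at hb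
          convert hb using 2 <;> exact Fin.ext (by simp only [Fin.val_mk]; omega) |>.symm
      obtain ⟨k, hk⟩ := hπ.2 _ hp
      exact ⟨k, by omega⟩

lemma hid (n : ℕ) :
    (∀ i, IsPeak (1 : Equiv.Perm (Fin (2 * n + 1))) i → Even i) ∧
    (∀ i, IsValley (1 : Equiv.Perm (Fin (2 * n + 1))) i → Even i) := by
  constructor
  · rintro i ⟨⟨h2, hle⟩, _, hb⟩
    simp only [Equiv.Perm.coe_one, id_eq, Fin.mk_lt_mk] at hb
    omega
  · rintro i ⟨⟨h2, hle⟩, ha, _⟩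
    simp only [Equiv.Perm.coe_one, id_eq, Fin.mk_lt_mk] at ha
    omega

lemma hne (n : ℕ) (hn : 1 ≤ n) (π : Equiv.Perm (Fin (2 * n + 1)))
    (hπ : ∀ i, IsValley π i → Odd i) : π * finRotate (2 * n + 1) ≠ 1 := by
  intro hπr
  have happ : ∀ x, π (finRotate (2 * n + 1) x) = x := by
    intro x
    have := congrFun (congrArg DFunLike.coe hπr) x
    simpa using this
  have key : ∀ x : Fin (2 * n + 1),
      (x.val = 0 → (π x).val = 2 * n) ∧ (x.val ≠ 0 → (π x).val = x.val - 1) := by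
    intro x
    obtain ⟨y, rfl⟩ := (finRotate (2 * n + 1)).surjective x
    rw [happ]
    have h1 : (finRotate (2 * n + 1) y).val
        = if y = Fin.last (2 * n) then 0 else y.val + 1 := by
      rw [finRotate_succ_apply]; exact Fin.val_add_one y
    by_cases hy : y = Fin.last (2 * n)
    · rw [h1, if_pos hy, hy]
      exact ⟨fun _ => rfl, fun h => absurd rfl h⟩
    · rw [h1, if_neg hy]
      exact ⟨fun h => absurd h (by omega), fun _ => by omega⟩
  have main1 : ∀ x y : Fin (2 * n + 1), x.val = 1 → y.val = 0 → π x < π y := by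
    intro x y hx hy
    rw [Fin.lt_def, (key x).2 (by omega), (key y).1 hy, hx]
    omega
  have main2 : ∀ x y : Fin (2 * n + 1), x.val = 1 → y.val = 2 → π x < π y := by
    intro x y hx hy
    rw [Fin.lt_def, (key x).2 (by omega), (key y).2 (by omega), hx, hy]
    omega
  have hv : IsValley π 2 := by
    refine ⟨⟨le_refl 2, by omega⟩, ?_, ?_⟩
    · exact main1 _ _ rfl rfl
    · exact main2 _ _ rfl rfl
  obtain ⟨k, hk⟩ := hπ 2 hv
  omega

theorem stmt6 (n : ℕ) (hn : 1 ≤ n) :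
    Nat.card {π : Equiv.Perm (Fin (2 * n + 1)) //
        (∀ i, IsPeak π i → Odd i) ∧ (∀ i, IsValley π i → Odd i)} <
    Nat.card {π : Equiv.Perm (Fin (2 * n + 1)) //
        (∀ i, IsPeak π i → Even i) ∧ (∀ i, IsValley π i → Even i)} := by
  classical
  let f : {π : Equiv.Perm (Fin (2 * n + 1)) //
        (∀ i, IsPeak π i → Odd i) ∧ (∀ i, IsValley π i → Odd i)} →
      {π : Equiv.Perm (Fin (2 * n + 1)) //
        (∀ i, IsPeak π i → Even i) ∧ (∀ i, IsValley π i → Even i)} :=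
    fun p => ⟨p.1 * finRotate (2 * n + 1), hmap n hn p.1 p.2⟩
  have hinj : Function.Injective f := by
    intro p q h
    apply Subtype.ext
    have h' : p.1 * finRotate (2 * n + 1) = q.1 * finRotate (2 * n + 1) :=
      congrArg Subtype.val h
    exact mul_right_cancel h'
  have hnotmem : (⟨1, hid n⟩ : {π : Equiv.Perm (Fin (2 * n + 1)) //
        (∀ i, IsPeak π i → Even i) ∧ (∀ i, IsValley π i → Even i)}) ∉ Set.range f := by
    rintro ⟨⟨π, hA⟩, hfe⟩
    exact hne n hn π hA.2 (congrArg Subtype.val hfe)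
  haveI : Fintype {π : Equiv.Perm (Fin (2 * n + 1)) //
        (∀ i, IsPeak π i → Odd i) ∧ (∀ i, IsValley π i → Odd i)} := Fintype.ofFinite _
  haveI : Fintype {π : Equiv.Perm (Fin (2 * n + 1)) //
        (∀ i, IsPeak π i → Even i) ∧ (∀ i, IsValley π i → Even i)} := Fintype.ofFinite _
  rw [Nat.card_eq_fintype_card, Nat.card_eq_fintype_card]
  exact Fintype.card_lt_of_injective_of_notMem f hinj hnotmem
end

section
/- For all n ≥ 4, the number of permutations of [n] with all peaks and valleys even is strictly less than the number of permutations of [n] with all peaks odd and all valleys even. -/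
namespace Stmt7

variable {n : ℕ}

/-- the permutation as a sequence of naturals, with junk (≥ n) outside the range -/
def sq (π : Equiv.Perm (Fin n)) (q : ℕ) : ℕ := if h : q < n then (π ⟨q, h⟩ : ℕ) else n + q

lemma sq_inj (π : Equiv.Perm (Fin n)) {q r : ℕ} (hq : q < n) (hr : r < n)
    (h : sq π q = sq π r) : q = r := by
  simp only [sq, dif_pos hq, dif_pos hr] at h
  have := π.injective (Fin.val_injective h)
  simpa using congrArg Fin.val this

lemma sq_ne (π : Equiv.Perm (Fin n)) {q r : ℕ} (hq : q < n) (hr : r < n)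
    (h : q ≠ r) : sq π q ≠ sq π r := fun hc => h (sq_inj π hq hr hc)

lemma isPeak_iff (π : Equiv.Perm (Fin n)) (i : ℕ) :
    IsPeak π i ↔ (2 ≤ i ∧ i + 1 ≤ n) ∧ sq π (i-2) < sq π (i-1) ∧ sq π i < sq π (i-1) := by
  constructor
  · rintro ⟨⟨h1, h2⟩, ha, hb⟩
    refine ⟨⟨h1, h2⟩, ?_, ?_⟩ <;>
      simp only [sq, dif_pos (show i-2 < n by omega), dif_pos (show i-1 < n by omega),
        dif_pos (show i < n by omega)] <;> exact_mod_cast ‹_›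
  · rintro ⟨⟨h1, h2⟩, ha, hb⟩
    refine ⟨⟨h1, h2⟩, ?_, ?_⟩ <;>
      [skip; skip] <;>
      · simp only [sq, dif_pos (show i-2 < n by omega), dif_pos (show i-1 < n by omega),
          dif_pos (show i < n by omega)] at ha hb
        exact_mod_cast ‹_›

lemma isValley_iff (π : Equiv.Perm (Fin n)) (i : ℕ) :
    IsValley π i ↔ (2 ≤ i ∧ i + 1 ≤ n) ∧ sq π (i-1) < sq π (i-2) ∧ sq π (i-1) < sq π i := by
  constructor
  · rintro ⟨⟨h1, h2⟩, ha, hb⟩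
    refine ⟨⟨h1, h2⟩, ?_, ?_⟩ <;>
      simp only [sq, dif_pos (show i-2 < n by omega), dif_pos (show i-1 < n by omega),
        dif_pos (show i < n by omega)] <;> exact_mod_cast ‹_›
  · rintro ⟨⟨h1, h2⟩, ha, hb⟩
    refine ⟨⟨h1, h2⟩, ?_, ?_⟩ <;>
      [skip; skip] <;>
      · simp only [sq, dif_pos (show i-2 < n by omega), dif_pos (show i-1 < n by omega),
          dif_pos (show i < n by omega)] at ha hb
        exact_mod_cast ‹_›

def CondA (π : Equiv.Perm (Fin n)) : Prop :=
  (∀ i, IsPeak π i → Even i) ∧ (∀ i, IsValley π i → Even i)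

def CondB (π : Equiv.Perm (Fin n)) : Prop :=
  (∀ i, IsPeak π i → Odd i) ∧ (∀ i, IsValley π i → Even i)

/-- A-rule: at odd positions the permutation is locally monotone -/
lemma mono {π : Equiv.Perm (Fin n)} (hA : CondA π) {i : ℕ} (hodd : i % 2 = 1)
    (h2 : 2 ≤ i) (hn : i + 1 ≤ n) :
    sq π (i-2) < sq π (i-1) ↔ sq π (i-1) < sq π i := by
  have hne1 := sq_ne π (show i-2 < n by omega) (show i-1 < n by omega) (by omega)
  have hne2 := sq_ne π (show i-1 < n by omega) (show i < n by omega) (by omega)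
  have hp : ¬ IsPeak π i := fun h => by
    have := hA.1 i h; rw [Nat.even_iff] at this; omega
  have hv : ¬ IsValley π i := fun h => by
    have := hA.2 i h; rw [Nat.even_iff] at this; omega
  rw [isPeak_iff] at hp
  rw [isValley_iff] at hv
  push_neg at hp hv
  constructor
  · intro h
    have := hp ⟨h2, hn⟩ h
    omega
  · intro h
    rcases lt_or_gt_of_ne hne1 with h' | h'
    · exact h'
    · exact absurd h (by have := hv ⟨h2, hn⟩ h'; omega)

def Site (π : Equiv.Perm (Fin n)) (j : ℕ) : Prop := j % 2 = 0 ∧ IsPeak π j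

lemma site_spec {π : Equiv.Perm (Fin n)} {j : ℕ} (h : Site π j) :
    2 ≤ j ∧ j + 1 ≤ n ∧ j % 2 = 0 ∧ sq π (j-2) < sq π (j-1) ∧ sq π j < sq π (j-1) := by
  obtain ⟨he, hp⟩ := h
  rw [isPeak_iff] at hp
  exact ⟨hp.1.1, hp.1.2, he, hp.2.1, hp.2.2⟩

/-- descent continues after a site (if room): π(j) > π(j+1)  (1-indexed entries, 0-indexed j-1,j,j+1… here sq-indices j-1, j) -/
lemma site_desc {π : Equiv.Perm (Fin n)} (hA : CondA π) {j : ℕ} (h : Site π j)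
    (hj : j + 2 ≤ n) : sq π (j+1) < sq π j := by
  obtain ⟨h2, hn, he, ha, hb⟩ := site_spec h
  have hm := mono hA (i := j+1) (by omega) (by omega) (by omega)
  simp only [show j+1-2 = j-1 by omega, show j+1-1 = j by omega] at hm
  have : ¬ sq π (j-1) < sq π j := by omega
  rcases lt_or_gt_of_ne (sq_ne π (show j < n by omega) (show j+1 < n by omega) (by omega)) with h' | h'
  · exact absurd (hm.mpr h') this
  · exact h'

/-- no two sites at even distance 2 -/
lemma site_adj {π : Equiv.Perm (Fin n)} (hA : CondA π) {j : ℕ} (h : Site π j) :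
    ¬ Site π (j+2) := by
  intro h'
  obtain ⟨h2, hn, he, ha, hb⟩ := site_spec h'
  have hd := site_desc hA h (by omega)
  simp only [show j+2-2 = j by omega, show j+2-1 = j+1 by omega] at ha
  omega


open Classical in
/-- the partner of position q (0-indexed) under the swap surgery -/
noncomputable def partner (π : Equiv.Perm (Fin n)) (q : ℕ) : ℕ :=
  if Site π (q+1) ∧ q+3 ≤ n then q+1
  else if Site π q ∧ q+2 ≤ n then q-1
  else if Site π (n-1) ∧ q+3 = n then q+1
  else if Site π (n-1) ∧ q+2 = n then q-1
  else q

lemma partner_lt {π : Equiv.Perm (Fin n)} {q : ℕ} (hq : q < n) : partner π q < n := by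
  unfold partner
  split_ifs with h1 h2 h3 h4
  · omega
  · omega
  · omega
  · omega
  · omega

lemma pl1 {π : Equiv.Perm (Fin n)} {q : ℕ} (h : Site π (q+1)) (hn : q+3 ≤ n) :
    partner π q = q+1 := by
  unfold partner; rw [if_pos ⟨h, hn⟩]

lemma pl2 {π : Equiv.Perm (Fin n)} {q : ℕ} (h : Site π q) (hn : q+2 ≤ n) :
    partner π q = q-1 := by
  have hpar : ¬ Site π (q+1) := fun h' => by have := h.1; have := h'.1; omega
  unfold partner
  rw [if_neg (fun hc => hpar hc.1), if_pos ⟨h, hn⟩]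

lemma pl3 {π : Equiv.Perm (Fin n)} (hA : CondA π) {q : ℕ} (h : Site π (n-1)) (hn : q+3 = n) :
    partner π q = q+1 := by
  have hn1 := (site_spec h).1
  have c1 : ¬ Site π (q+1) := fun h' => by
    have := h.1; have := h'.1; omega
  have c2 : ¬ Site π q := fun h' => by
    have := site_adj hA h'
    have : q + 2 = n - 1 := by omega
    exact site_adj hA h' (this ▸ h)
  unfold partner
  rw [if_neg (fun hc => c1 hc.1), if_neg (fun hc => c2 hc.1), if_pos ⟨h, hn⟩]

lemma pl4 {π : Equiv.Perm (Fin n)} {q : ℕ} (h : Site π (n-1)) (hn : q+2 = n) :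
    partner π q = q-1 := by
  have hn1 := (site_spec h).1
  have c1 : ¬ (Site π (q+1) ∧ q+3 ≤ n) := fun hc => by omega
  have c2 : ¬ Site π q := fun h' => by have := h.1; have := h'.1; omega
  unfold partner
  rw [if_neg c1, if_neg (fun hc => c2 hc.1), if_neg (fun hc => by omega), if_pos ⟨h, hn⟩]

lemma pl0 {π : Equiv.Perm (Fin n)} {q : ℕ}
    (c1 : ¬ (Site π (q+1) ∧ q+3 ≤ n)) (c2 : ¬ (Site π q ∧ q+2 ≤ n))
    (c3 : ¬ (Site π (n-1) ∧ q+3 = n)) (c4 : ¬ (Site π (n-1) ∧ q+2 = n)) :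
    partner π q = q := by
  unfold partner
  rw [if_neg c1, if_neg c2, if_neg c3, if_neg c4]

lemma partner_invol {π : Equiv.Perm (Fin n)} (hA : CondA π) (q : ℕ) :
    partner π (partner π q) = q := by
  by_cases h1 : Site π (q+1) ∧ q+3 ≤ n
  · rw [pl1 h1.1 h1.2, pl2 h1.1 (by omega)]; omega
  · by_cases h2 : Site π q ∧ q+2 ≤ n
    · have h2q := (site_spec h2.1).1
      rw [pl2 h2.1 h2.2, pl1 (by rw [show q-1+1=q by omega]; exact h2.1) (by omega)]
      omega
    · by_cases h3 : Site π (n-1) ∧ q+3 = n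
      · rw [pl3 hA h3.1 h3.2, pl4 h3.1 (by omega)]; omega
      · by_cases h4 : Site π (n-1) ∧ q+2 = n
        · have hn1 := (site_spec h4.1).1
          rw [pl4 h4.1 h4.2, pl3 hA h4.1 (by omega)]
          omega
        · rw [pl0 h1 h2 h3 h4, pl0 h1 h2 h3 h4]

noncomputable def pf (π : Equiv.Perm (Fin n)) : Fin n → Fin n :=
  fun x => ⟨partner π x.1, partner_lt x.2⟩

lemma pf_invol {π : Equiv.Perm (Fin n)} (hA : CondA π) : Function.Involutive (pf π) := by
  intro x
  simp only [pf]
  ext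
  exact partner_invol hA x.1

/-- the surgery map -/
noncomputable def Fm (π : Equiv.Perm (Fin n)) (hA : CondA π) : Equiv.Perm (Fin n) :=
  (Function.Involutive.toPerm (pf π) (pf_invol hA)).trans π

lemma sq_Fm {π : Equiv.Perm (Fin n)} (hA : CondA π) {q : ℕ} (hq : q < n) :
    sq (Fm π hA) q = sq π (partner π q) := by
  simp only [sq, dif_pos hq, dif_pos (partner_lt hq : partner π q < n)]
  rfl


lemma Fm_peak_odd {π : Equiv.Perm (Fin n)} (hA : CondA π) :
    ∀ i, IsPeak (Fm π hA) i → i % 2 = 1 := by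
  intro i hp
  by_contra hodd
  have hie : i % 2 = 0 := by omega
  rw [isPeak_iff] at hp
  obtain ⟨⟨h2, hn⟩, ha, hb⟩ := hp
  rw [sq_Fm hA (by omega : i-2 < n), sq_Fm hA (by omega : i-1 < n)] at ha
  rw [sq_Fm hA (by omega : i < n), sq_Fm hA (by omega : i-1 < n)] at hb
  by_cases hsi : Site π i
  · have hspec := site_spec hsi
    by_cases hii : i + 2 ≤ n
    · -- interior site at i
      have e1 : partner π (i-1) = i := by
        rw [pl1 (by rw [show i-1+1 = i by omega]; exact hsi) (by omega)]; omega
      have e2 : partner π (i-2) = i-2 := by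
        refine pl0 ?_ ?_ ?_ ?_
        · rintro ⟨hs, -⟩; rw [show i-2+1 = i-1 by omega] at hs
          have := hs.1; omega
        · rintro ⟨hs, -⟩
          exact site_adj hA hs (by rw [show i-2+2 = i by omega]; exact hsi)
        · rintro ⟨-, h⟩; omega
        · rintro ⟨-, h⟩; omega
      have e3 : partner π i = i - 1 := pl2 hsi hii
      rw [e1, e3] at hb
      have := hspec.2.2.2.2
      omega
    · -- boundary site: i = n-1
      have hin : i = n - 1 := by omega
      have e1 : partner π (i-1) = i-2 := by
        rw [pl4 (hin ▸ hsi) (by omega)]; omega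
      have e2 : partner π (i-2) = i-1 := by
        rw [pl3 hA (hin ▸ hsi) (by omega)]; omega
      rw [e1, e2] at ha
      have := hspec.2.2.2.1
      omega
  · -- no site at i
    have e1 : partner π (i-1) = i-1 := by
      refine pl0 ?_ ?_ ?_ ?_
      · rintro ⟨hs, -⟩; rw [show i-1+1 = i by omega] at hs; exact hsi hs
      · rintro ⟨hs, -⟩; have := hs.1; omega
      · rintro ⟨hs, h⟩; have := hs.1; omega
      · rintro ⟨hs, h⟩
        exact hsi (by rw [show i = n-1 by omega] ; exact hs)
    by_cases hs2 : Site π (i-2)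
    · -- site at i-2
      have hspec2 := site_spec hs2
      have hi4 : 4 ≤ i := by omega
      have e2 : partner π (i-2) = i-3 := by
        rw [pl2 hs2 (by omega)]; omega
      rw [e1, e2] at ha
      -- u(i-2) < u(i-3) and mono at i-1 gives u(i-1) < u(i-2)
      have hd : sq π (i-2) < sq π (i-3) := by
        have := hspec2.2.2.2.2
        simpa [show i-2-1 = i-3 by omega] using this
      have hm := mono hA (i := i-1) (by omega) (by omega) (by omega)
      rw [show i-1-2 = i-3 by omega, show i-1-1 = i-2 by omega] at hm
      have hne := sq_ne π (show i-2 < n by omega) (show i-1 < n by omega) (by omega)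
      have : ¬ sq π (i-3) < sq π (i-2) := by omega
      have : ¬ sq π (i-2) < sq π (i-1) := fun hc => this (hm.mpr hc)
      omega
    · -- no site at i, i-2
      have e2 : partner π (i-2) = i-2 := by
        refine pl0 ?_ ?_ ?_ ?_
        · rintro ⟨hs, -⟩; rw [show i-2+1 = i-1 by omega] at hs; have := hs.1; omega
        · rintro ⟨hs, -⟩; exact hs2 hs
        · rintro ⟨hs, h⟩
          exact hsi (by rw [show i = n-1 by omega]; exact hs)
        · rintro ⟨hs, h⟩; omega
      by_cases hb3 : Site π (n-1) ∧ i + 3 = n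
      · -- spurious-boundary interference: i = n-3
        have e3 : partner π i = i+1 := pl3 hA hb3.1 hb3.2
        rw [e1, e2] at ha
        rw [e1, e3] at hb
        have hspecB := site_spec hb3.1
        have hd1 : sq π (n-3) < sq π (n-2) := by
          have := hspecB.2.2.2.1
          simpa [show n-1-2 = n-3 by omega, show n-1-1 = n-2 by omega] using this
        have hm := mono hA (i := n-2) (by have := hspecB.2.2.1; omega) (by omega) (by omega)
        rw [show n-2-2 = n-4 by omega, show n-2-1 = n-3 by omega] at hm
        have hd2 : sq π (n-4) < sq π (n-3) := hm.mpr hd1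
        rw [show i+1 = n-2 by omega, show i-1 = n-4 by omega] at hb
        omega
      · have e3 : partner π i = i := by
          refine pl0 ?_ ?_ ?_ ?_
          · rintro ⟨hs, -⟩; have := hs.1; omega
          · rintro ⟨hs, -⟩; exact hsi hs
          · rintro ⟨hs, h⟩; exact hb3 ⟨hs, h⟩
          · rintro ⟨hs, h⟩; have := hs.1; omega
        rw [e1, e2] at ha
        rw [e1, e3] at hb
        exact hsi ⟨hie, (isPeak_iff π i).mpr ⟨⟨h2, hn⟩, ha, hb⟩⟩

lemma Fm_valley_even {π : Equiv.Perm (Fin n)} (hA : CondA π) :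
    ∀ i, IsValley (Fm π hA) i → i % 2 = 0 := by
  intro i hv
  by_contra hpar
  have hio : i % 2 = 1 := by omega
  rw [isValley_iff] at hv
  obtain ⟨⟨h2, hn⟩, va, vb⟩ := hv
  rw [sq_Fm hA (by omega : i-2 < n), sq_Fm hA (by omega : i-1 < n)] at va
  rw [sq_Fm hA (by omega : i < n), sq_Fm hA (by omega : i-1 < n)] at vb
  by_cases h1 : Site π (i-1)
  · -- site at i-1 (interior automatically)
    have hspec := site_spec h1
    have e1 : partner π (i-1) = i-2 := by
      rw [pl2 h1 (by omega)]; omega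
    have e2 : partner π (i-2) = i-1 := by
      rw [pl1 (by rw [show i-2+1 = i-1 by omega]; exact h1) (by omega)]; omega
    rw [e1, e2] at va
    have := hspec.2.2.2.2
    have : sq π (i-1) < sq π (i-2) := by
      have := hspec.2.2.2.2
      simpa [show i-1-1 = i-2 by omega] using this
    omega
  · by_cases h2b : Site π (n-1) ∧ i + 2 = n
    · -- i = n-2, boundary site
      have e1 : partner π (i-1) = i := by
        rw [pl3 hA h2b.1 (by omega)]; omega
      have e3 : partner π i = i-1 := by
        rw [pl4 h2b.1 (by omega)]
      rw [e1, e3] at vb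
      have hspecB := site_spec h2b.1
      have : sq π (n-3) < sq π (n-2) := by
        have := hspecB.2.2.2.1
        simpa [show n-1-2 = n-3 by omega, show n-1-1 = n-2 by omega] using this
      rw [show i-1 = n-3 by omega] at vb
      rw [show i = n-2 by omega] at vb
      omega
    · have e1 : partner π (i-1) = i-1 := by
        refine pl0 ?_ ?_ ?_ ?_
        · rintro ⟨hs, -⟩; rw [show i-1+1 = i by omega] at hs; have := hs.1; omega
        · rintro ⟨hs, -⟩; exact h1 hs
        · rintro ⟨hs, h⟩; exact h2b ⟨hs, by omega⟩
        · rintro ⟨hs, h⟩; have := hs.1; omega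
      have e2 : partner π (i-2) = i-2 := by
        refine pl0 ?_ ?_ ?_ ?_
        · rintro ⟨hs, -⟩; rw [show i-2+1 = i-1 by omega] at hs; exact h1 hs
        · rintro ⟨hs, -⟩; have := hs.1; omega
        · rintro ⟨hs, h⟩; have := hs.1; omega
        · rintro ⟨hs, h⟩; have := hs.1; omega
      by_cases h3 : Site π (i+1) ∧ i + 3 ≤ n
      · have e3 : partner π i = i+1 := pl1 h3.1 h3.2
        rw [e1, e2] at va
        rw [e1, e3] at vb
        have hspec3 := site_spec h3.1
        have : sq π (i-1) < sq π i := by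
          have := hspec3.2.2.2.1
          simpa [show i+1-2 = i-1 by omega, show i+1-1 = i by omega] using this
        have : IsValley π i := (isValley_iff π i).mpr ⟨⟨h2, hn⟩, va, this⟩
        have := hA.2 i this
        rw [Nat.even_iff] at this
        omega
      · have e3 : partner π i = i := by
          refine pl0 ?_ ?_ ?_ ?_
          · exact h3
          · rintro ⟨hs, -⟩; have := hs.1; omega
          · rintro ⟨hs, h⟩; have := hs.1; omega
          · rintro ⟨hs, h⟩; exact h2b ⟨hs, h⟩
        rw [e1, e2] at va
        rw [e1, e3] at vb
        have : IsValley π i := (isValley_iff π i).mpr ⟨⟨h2, hn⟩, va, vb⟩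
        have := hA.2 i this
        rw [Nat.even_iff] at this
        omega

lemma Fm_memB {π : Equiv.Perm (Fin n)} (hA : CondA π) : CondB (Fm π hA) :=
  ⟨fun i h => Nat.odd_iff.mpr (Fm_peak_odd hA i h),
   fun i h => Nat.even_iff.mpr (Fm_valley_even hA i h)⟩


lemma not_site_odd {π : Equiv.Perm (Fin n)} {j : ℕ} (h : j % 2 = 1) : ¬ Site π j :=
  fun hs => by have := hs.1; omega

lemma not_site_low {π : Equiv.Perm (Fin n)} {j : ℕ} (h : j < 2) : ¬ Site π j :=
  fun hs => by have := (site_spec hs).1; omega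

lemma not_site_high {π : Equiv.Perm (Fin n)} {j : ℕ} (h : n < j + 1) : ¬ Site π j :=
  fun hs => by have := (site_spec hs).2.1; omega

/-- characterization of interior sites from the image -/
lemma siteC1 {π : Equiv.Perm (Fin n)} (hA : CondA π) {j : ℕ} (hje : j % 2 = 0)
    (hj2 : 2 ≤ j) (hjn : j + 2 ≤ n) :
    Site π j ↔ (IsPeak (Fm π hA) (j+1) ∧ ¬ Site π (j+2)) := by
  constructor
  · intro hs
    have hspec := site_spec hs
    refine ⟨?_, site_adj hA hs⟩
    have e1 : partner π (j-1) = j := by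
      rw [pl1 (by rw [show j-1+1 = j by omega]; exact hs) (by omega)]; omega
    have e2 : partner π j = j-1 := pl2 hs (by omega)
    have e3 : partner π (j+1) = j+1 := by
      refine pl0 ?_ ?_ ?_ ?_
      · rintro ⟨hs', -⟩; exact site_adj hA hs hs'
      · rintro ⟨hs', -⟩; have := hs'.1; omega
      · rintro ⟨hs', hq⟩; have := hs'.1; omega
      · rintro ⟨hs', hq⟩
        exact site_adj hA hs (by rw [show j+2 = n-1 by omega]; exact hs')
    have hd := site_desc hA hs hjn
    rw [isPeak_iff]
    refine ⟨⟨by omega, by omega⟩, ?_, ?_⟩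
    · rw [show j+1-2 = j-1 by omega, show j+1-1 = j by omega,
        sq_Fm hA (by omega : j-1 < n), sq_Fm hA (by omega : j < n), e1, e2]
      have := hspec.2.2.2.2
      omega
    · rw [show j+1-1 = j by omega,
        sq_Fm hA (by omega : j+1 < n), sq_Fm hA (by omega : j < n), e3, e2]
      have := hspec.2.2.2.2
      omega
  · rintro ⟨hp, hs2⟩
    by_contra hs
    rw [isPeak_iff] at hp
    obtain ⟨⟨hb1, hb2⟩, ha, hb⟩ := hp
    rw [show j+1-2 = j-1 by omega] at ha
    rw [show j+1-1 = j by omega] at ha hb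
    rw [sq_Fm hA (by omega : j-1 < n), sq_Fm hA (by omega : j < n)] at ha
    rw [sq_Fm hA (by omega : j+1 < n), sq_Fm hA (by omega : j < n)] at hb
    have e1 : partner π (j-1) = j-1 := by
      refine pl0 ?_ ?_ ?_ ?_
      · rintro ⟨hs', -⟩; rw [show j-1+1 = j by omega] at hs'; exact hs hs'
      · rintro ⟨hs', -⟩; have := hs'.1; omega
      · rintro ⟨hs', hq⟩; have := hs'.1; omega
      · rintro ⟨hs', hq⟩; omega
    have e2 : partner π j = j := by
      refine pl0 ?_ ?_ ?_ ?_
      · rintro ⟨hs', -⟩; have := hs'.1; omega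
      · rintro ⟨hs', -⟩; exact hs hs'
      · rintro ⟨hs', hq⟩; exact hs2 (by rw [show j+2 = n-1 by omega]; exact hs')
      · rintro ⟨hs', hq⟩; have := hs'.1; omega
    have e3 : partner π (j+1) = j+1 := by
      refine pl0 ?_ ?_ ?_ ?_
      · rintro ⟨hs', -⟩; exact hs2 hs'
      · rintro ⟨hs', -⟩; have := hs'.1; omega
      · rintro ⟨hs', hq⟩; have := hs'.1; omega
      · rintro ⟨hs', hq⟩; exact hs2 (by rw [show j+2 = n-1 by omega]; exact hs')
    rw [e1, e2] at ha
    rw [e3, e2] at hb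
    have : IsPeak π (j+1) := (isPeak_iff π (j+1)).mpr
      ⟨⟨by omega, by omega⟩, by rw [show j+1-2 = j-1 by omega, show j+1-1 = j by omega]; exact ha,
        by rw [show j+1-1 = j by omega]; exact hb⟩
    have := hA.1 (j+1) this
    rw [Nat.even_iff] at this
    omega

/-- characterization of the boundary site from the image -/
lemma siteC2 {π : Equiv.Perm (Fin n)} (hA : CondA π) (hne : (n-1) % 2 = 0) (hn5 : 5 ≤ n) :
    Site π (n-1) ↔ (IsPeak (Fm π hA) (n-2) ∧ sq (Fm π hA) (n-4) < sq (Fm π hA) (n-2)) := by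
  constructor
  · intro hs
    have hspec := site_spec hs
    have hd1 : sq π (n-3) < sq π (n-2) := by
      have := hspec.2.2.2.1
      simpa [show n-1-2 = n-3 by omega, show n-1-1 = n-2 by omega] using this
    have hm := mono hA (i := n-2) (by omega) (by omega) (by omega)
    rw [show n-2-2 = n-4 by omega, show n-2-1 = n-3 by omega] at hm
    have hd2 : sq π (n-4) < sq π (n-3) := hm.mpr hd1
    have e1 : partner π (n-3) = n-2 := by
      rw [pl3 hA hs (by omega)]; omega
    have e2 : partner π (n-2) = n-3 := by
      rw [pl4 hs (by omega)]; omega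
    have e3 : partner π (n-4) = n-4 := by
      refine pl0 ?_ ?_ ?_ ?_
      · rintro ⟨hs', -⟩
        rw [show n-4+1 = n-3 by omega] at hs'
        exact site_adj hA hs' (by rw [show n-3+2 = n-1 by omega]; exact hs)
      · rintro ⟨hs', -⟩; have := hs'.1; omega
      · rintro ⟨hs', hq⟩; omega
      · rintro ⟨hs', hq⟩; omega
    constructor
    · rw [isPeak_iff]
      refine ⟨⟨by omega, by omega⟩, ?_, ?_⟩
      · rw [show n-2-2 = n-4 by omega, show n-2-1 = n-3 by omega,
          sq_Fm hA (by omega : n-4 < n), sq_Fm hA (by omega : n-3 < n), e3, e1]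
        omega
      · rw [show n-2-1 = n-3 by omega,
          sq_Fm hA (by omega : n-2 < n), sq_Fm hA (by omega : n-3 < n), e2, e1]
        omega
    · rw [sq_Fm hA (by omega : n-4 < n), sq_Fm hA (by omega : n-2 < n), e3, e2]
      omega
  · rintro ⟨hp, hval⟩
    by_contra hs
    by_cases hs3 : Site π (n-3)
    · have e1 : partner π (n-4) = n-3 := by
        rw [pl1 (by rw [show n-4+1 = n-3 by omega]; exact hs3) (by omega)]; omega
      have e2 : partner π (n-2) = n-2 := by
        refine pl0 ?_ ?_ ?_ ?_
        · rintro ⟨hs', hq⟩; omega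
        · rintro ⟨hs', -⟩; have := hs'.1; omega
        · rintro ⟨hs', hq⟩; omega
        · rintro ⟨hs', hq⟩; exact hs hs'
      rw [sq_Fm hA (by omega : n-4 < n), sq_Fm hA (by omega : n-2 < n), e1, e2] at hval
      have hd := site_desc hA hs3 (by omega)
      rw [show n-3+1 = n-2 by omega] at hd
      omega
    · rw [isPeak_iff] at hp
      obtain ⟨⟨hb1, hb2⟩, ha, hb⟩ := hp
      rw [show n-2-2 = n-4 by omega] at ha
      rw [show n-2-1 = n-3 by omega] at ha hb
      rw [sq_Fm hA (by omega : n-4 < n), sq_Fm hA (by omega : n-3 < n)] at ha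
      rw [sq_Fm hA (by omega : n-2 < n), sq_Fm hA (by omega : n-3 < n)] at hb
      have e1 : partner π (n-4) = n-4 := by
        refine pl0 ?_ ?_ ?_ ?_
        · rintro ⟨hs', -⟩; rw [show n-4+1 = n-3 by omega] at hs'; exact hs3 hs'
        · rintro ⟨hs', -⟩; have := hs'.1; omega
        · rintro ⟨hs', hq⟩; omega
        · rintro ⟨hs', hq⟩; omega
      have e2 : partner π (n-3) = n-3 := by
        refine pl0 ?_ ?_ ?_ ?_
        · rintro ⟨hs', -⟩; have := hs'.1; omega
        · rintro ⟨hs', -⟩; exact hs3 hs'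
        · rintro ⟨hs', hq⟩; exact hs hs'
        · rintro ⟨hs', hq⟩; omega
      have e3 : partner π (n-2) = n-2 := by
        refine pl0 ?_ ?_ ?_ ?_
        · rintro ⟨hs', hq⟩; omega
        · rintro ⟨hs', -⟩; have := hs'.1; omega
        · rintro ⟨hs', hq⟩; omega
        · rintro ⟨hs', hq⟩; exact hs hs'
      rw [e1, e2] at ha
      rw [e3, e2] at hb
      have : IsPeak π (n-2) := (isPeak_iff π (n-2)).mpr
        ⟨⟨by omega, by omega⟩,
          by rw [show n-2-2 = n-4 by omega, show n-2-1 = n-3 by omega]; exact ha,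
          by rw [show n-2-1 = n-3 by omega]; exact hb⟩
      have := hA.1 (n-2) this
      rw [Nat.even_iff] at this
      omega


lemma Fm_inj {π σ : Equiv.Perm (Fin n)} (hn4 : 4 ≤ n) (hA : CondA π) (hA' : CondA σ)
    (h : Fm π hA = Fm σ hA') : π = σ := by
  -- step 1: sites agree
  have key : ∀ m j, n ≤ j + m → (Site π j ↔ Site σ j) := by
    intro m
    induction m with
    | zero =>
      intro j hj
      constructor <;> (intro hs; exact absurd (site_spec hs).2.1 (by omega))
    | succ m ih =>
      intro j hj
      rcases Nat.lt_or_ge j 2 with hj2 | hj2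
      · exact ⟨fun hs => absurd hs (not_site_low hj2), fun hs => absurd hs (not_site_low hj2)⟩
      rcases eq_or_ne (j % 2) 1 with hje | hje
      · exact ⟨fun hs => absurd hs (not_site_odd hje), fun hs => absurd hs (not_site_odd hje)⟩
      have hje : j % 2 = 0 := by omega
      rcases Nat.lt_or_ge n (j+1) with hjn | hjn
      · exact ⟨fun hs => absurd hs (not_site_high hjn), fun hs => absurd hs (not_site_high hjn)⟩
      rcases Nat.lt_or_ge n (j+2) with hjn2 | hjn2
      · -- boundary: j = n-1
        have hjeq : j = n - 1 := by omega
        subst hjeq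
        rw [siteC2 hA hje (by omega), siteC2 hA' hje (by omega), h]
      · -- interior
        rw [siteC1 hA hje hj2 hjn2, siteC1 hA' hje hj2 hjn2, h, ih (j+2) (by omega)]
  have keyE : ∀ j, Site π j = Site σ j := fun j => propext (key n j (by omega))
  -- step 2: partners agree
  have hpart : ∀ q, partner π q = partner σ q := by
    intro q
    have h1 := keyE (q+1)
    have h2 := keyE q
    have h3 := keyE (n-1)
    unfold partner
    rw [h1, h2, h3]
  -- step 3: conclude
  ext x
  have h1 : π x = Fm π hA (pf π x) := by
    simp only [Fm, Equiv.trans_apply, Function.Involutive.coe_toPerm]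
    rw [pf_invol hA]
  have h2 : σ x = Fm σ hA' (pf σ x) := by
    simp only [Fm, Equiv.trans_apply, Function.Involutive.coe_toPerm]
    rw [pf_invol hA']
  have hpf : pf π x = pf σ x := by
    simp only [pf]
    ext
    exact hpart x.1
  rw [h1, h2, h, hpf]


def wstar (hn : 4 ≤ n) : Equiv.Perm (Fin n) :=
  Equiv.swap ⟨2, by omega⟩ ⟨3, by omega⟩

lemma sq_wstar (hn : 4 ≤ n) {q : ℕ} (hq : q < n) :
    sq (wstar hn) q = if q = 2 then 3 else if q = 3 then 2 else q := by
  simp only [sq, dif_pos hq, wstar]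
  by_cases h2 : q = 2
  · subst h2
    rw [if_pos rfl, Equiv.swap_apply_left]
  · by_cases h3 : q = 3
    · subst h3
      rw [if_neg (by omega), if_pos rfl, Equiv.swap_apply_right]
    · rw [if_neg h2, if_neg h3,
        Equiv.swap_apply_of_ne_of_ne (by simp [Fin.ext_iff]; omega) (by simp [Fin.ext_iff]; omega)]

lemma wstar_peak (hn : 4 ≤ n) : ∀ i, IsPeak (wstar hn) i → i = 3 := by
  intro i hp
  rw [isPeak_iff] at hp
  obtain ⟨⟨h2, hin⟩, ha, hb⟩ := hp
  rw [sq_wstar hn (by omega : i-2 < n), sq_wstar hn (by omega : i-1 < n)] at ha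
  rw [sq_wstar hn (by omega : i < n), sq_wstar hn (by omega : i-1 < n)] at hb
  split_ifs at ha hb <;> omega

lemma wstar_valley (hn : 4 ≤ n) : ∀ i, IsValley (wstar hn) i → i % 2 = 0 := by
  intro i hv
  rw [isValley_iff] at hv
  obtain ⟨⟨h2, hin⟩, va, vb⟩ := hv
  rw [sq_wstar hn (by omega : i-2 < n), sq_wstar hn (by omega : i-1 < n)] at va
  rw [sq_wstar hn (by omega : i < n), sq_wstar hn (by omega : i-1 < n)] at vb
  split_ifs at va vb <;> omega

lemma wstar_memB (hn : 4 ≤ n) : CondB (wstar hn) :=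
  ⟨fun i h => by have := wstar_peak hn i h; subst this; exact ⟨1, by norm_num⟩,
   fun i h => Nat.even_iff.mpr (wstar_valley hn i h)⟩

lemma Fm_ne_wstar (hn : 4 ≤ n) (π : Equiv.Perm (Fin n)) (hA : CondA π) :
    Fm π hA ≠ wstar hn := by
  intro h
  have hkey : ∀ j, Site π j → j = 2 ∨ (j = n-1 ∧ n = 5) := by
    intro j hs
    have hspec := site_spec hs
    rcases Nat.lt_or_ge n (j+2) with hbd | hint
    · right
      have hje : j = n-1 := by omega
      subst hje
      have hpk : IsPeak (Fm π hA) (n-2) :=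
        ((siteC2 hA hs.1 (by have := hs.1; omega)).mp hs).1
      rw [h] at hpk
      have := wstar_peak hn _ hpk
      omega
    · left
      have hpk : IsPeak (Fm π hA) (j+1) := ((siteC1 hA hs.1 hspec.1 hint).mp hs).1
      rw [h] at hpk
      have := wstar_peak hn _ hpk
      omega
  have hv : ∀ q, q < n → sq π (partner π q) = sq (wstar hn) q := fun q hq => by
    rw [← sq_Fm hA hq, h]
  by_cases hs2 : Site π 2 <;> by_cases hsb : Site π (n-1)
  · rcases hkey _ hsb with h' | ⟨-, h5⟩
    · omega
    · exact site_adj hA hs2 (by rw [show (2:ℕ)+2 = n-1 by omega]; exact hsb)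
  · -- only Site 2
    have e1 : partner π 1 = 2 := by
      rw [pl1 (by show Site π (1+1); exact hs2) (by omega)]
    have e2 : partner π 2 = 1 := by
      rw [pl2 hs2 (by omega)]
    have e3 : partner π 3 = 3 := by
      refine pl0 ?_ ?_ ?_ ?_
      · rintro ⟨hs', hle⟩
        rcases hkey _ hs' with h' | ⟨h', h5⟩ <;> omega
      · rintro ⟨hs', -⟩; have := hs'.1; omega
      · rintro ⟨hs', -⟩; exact hsb hs'
      · rintro ⟨hs', -⟩; exact hsb hs'
    have k1 : sq π 1 = 3 := by
      have := hv 2 (by omega); rw [e2, sq_wstar hn (by omega : (2:ℕ) < n)] at this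
      simpa using this
    have k2 : sq π 2 = 1 := by
      have := hv 1 (by omega); rw [e1, sq_wstar hn (by omega : (1:ℕ) < n)] at this
      simpa using this
    have k3 : sq π 3 = 2 := by
      have := hv 3 (by omega); rw [e3, sq_wstar hn (by omega : (3:ℕ) < n)] at this
      simpa using this
    have hval : IsValley π 3 := (isValley_iff π 3).mpr
      ⟨⟨by omega, by omega⟩, by norm_num; omega, by norm_num; omega⟩
    have := hA.2 3 hval
    rw [Nat.even_iff] at this
    omega
  · -- only Site (n-1)
    rcases hkey _ hsb with h' | ⟨-, h5⟩
    · omega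
    subst h5
    have e2 : partner π 2 = 3 := by
      rw [pl3 hA hsb (by norm_num)]
    have e3 : partner π 3 = 2 := by
      rw [pl4 hsb (by norm_num)]
    have e4 : partner π 4 = 4 := by
      refine pl0 ?_ ?_ ?_ ?_
      · rintro ⟨hs', hle⟩; omega
      · rintro ⟨hs', hle⟩; omega
      · rintro ⟨-, hle⟩; omega
      · rintro ⟨-, hle⟩; omega
    have k3 : sq π 3 = 3 := by
      have := hv 2 (by omega); rw [e2, sq_wstar hn (by omega : (2:ℕ) < 5)] at this
      simpa using this
    have k4 : sq π 4 = 4 := by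
      have := hv 4 (by omega); rw [e4, sq_wstar hn (by omega : (4:ℕ) < 5)] at this
      simpa using this
    have hspec := site_spec hsb
    norm_num at hspec
    omega
  · -- no relevant sites
    have e1 : partner π 1 = 1 := by
      refine pl0 ?_ ?_ ?_ ?_
      · rintro ⟨hs', -⟩; exact hs2 hs'
      · rintro ⟨hs', -⟩; have := hs'.1; omega
      · rintro ⟨hs', -⟩; exact hsb hs'
      · rintro ⟨hs', -⟩; exact hsb hs'
    have e2 : partner π 2 = 2 := by
      refine pl0 ?_ ?_ ?_ ?_
      · rintro ⟨hs', -⟩; have := hs'.1; omega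
      · rintro ⟨hs', -⟩; exact hs2 hs'
      · rintro ⟨hs', -⟩; exact hsb hs'
      · rintro ⟨hs', -⟩; exact hsb hs'
    have e3 : partner π 3 = 3 := by
      refine pl0 ?_ ?_ ?_ ?_
      · rintro ⟨hs', hle⟩
        rcases hkey _ hs' with h' | ⟨h', h5⟩ <;> omega
      · rintro ⟨hs', -⟩; have := hs'.1; omega
      · rintro ⟨hs', -⟩; exact hsb hs'
      · rintro ⟨hs', -⟩; exact hsb hs'
    have k1 : sq π 1 = 1 := by
      have := hv 1 (by omega); rw [e1, sq_wstar hn (by omega : (1:ℕ) < n)] at this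
      simpa using this
    have k2 : sq π 2 = 3 := by
      have := hv 2 (by omega); rw [e2, sq_wstar hn (by omega : (2:ℕ) < n)] at this
      simpa using this
    have k3 : sq π 3 = 2 := by
      have := hv 3 (by omega); rw [e3, sq_wstar hn (by omega : (3:ℕ) < n)] at this
      simpa using this
    have hpk : IsPeak π 3 := (isPeak_iff π 3).mpr
      ⟨⟨by omega, by omega⟩, by norm_num; omega, by norm_num; omega⟩
    have := hA.1 3 hpk
    rw [Nat.even_iff] at this
    omega

end Stmt7

theorem stmt7 (n : ℕ) (hn : 4 ≤ n) :
    Nat.card {π : Equiv.Perm (Fin n) //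
        (∀ i, IsPeak π i → Even i) ∧ (∀ i, IsValley π i → Even i)} <
    Nat.card {π : Equiv.Perm (Fin n) //
        (∀ i, IsPeak π i → Odd i) ∧ (∀ i, IsValley π i → Even i)} := by
  classical
  rw [Nat.card_eq_fintype_card, Nat.card_eq_fintype_card]
  refine Fintype.card_lt_of_injective_of_notMem
    (fun p => ⟨Stmt7.Fm p.1 p.2, Stmt7.Fm_memB p.2⟩) ?_
    (b := ⟨Stmt7.wstar hn, Stmt7.wstar_memB hn⟩) ?_
  · intro a b hab
    exact Subtype.ext (Stmt7.Fm_inj hn a.2 b.2 (congrArg Subtype.val hab))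
  · rintro ⟨⟨π, hA⟩, hp⟩
    exact Stmt7.Fm_ne_wstar hn π hA (congrArg Subtype.val hp)
end

section
/- For every permutation π of [n] with n ≥ 1, the number of up-down runs of π equals the length of the longest alternating subsequence of π. -/
/-- Positions `a..b` (1-indexed, `a < b`) form a birun of `π`: a maximal consecutive
subsequence of length at least two that is strictly increasing or strictly decreasing. -/
def IsBirun {n : ℕ} (π : Equiv.Perm (Fin n)) (a b : ℕ) : Prop :=
  ∃ h : 1 ≤ a ∧ a < b ∧ b ≤ n,
    (((∀ i, ∀ _ : a ≤ i ∧ i < b, π ⟨i - 1, by omega⟩ < π ⟨i, by omega⟩) ∧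
      (a = 1 ∨ ∃ _ : 2 ≤ a, ¬ π ⟨a - 2, by omega⟩ < π ⟨a - 1, by omega⟩) ∧
      (b = n ∨ ∃ _ : b + 1 ≤ n, ¬ π ⟨b - 1, by omega⟩ < π ⟨b, by omega⟩)) ∨
     ((∀ i, ∀ _ : a ≤ i ∧ i < b, π ⟨i, by omega⟩ < π ⟨i - 1, by omega⟩) ∧
      (a = 1 ∨ ∃ _ : 2 ≤ a, ¬ π ⟨a - 1, by omega⟩ < π ⟨a - 2, by omega⟩) ∧
      (b = n ∨ ∃ _ : b + 1 ≤ n, ¬ π ⟨b, by omega⟩ < π ⟨b - 1, by omega⟩)))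

/-- Positions `a..b` form an up-down run of `π`: either a birun, or the initial run of
length one (the single first letter, when `n = 1` or `π(1) > π(2)`). -/
def IsUpDownRun {n : ℕ} (π : Equiv.Perm (Fin n)) (a b : ℕ) : Prop :=
  IsBirun π a b ∨
    (a = 1 ∧ b = 1 ∧ (n = 1 ∨ ∃ _ : 2 ≤ n, π ⟨1, by omega⟩ < π ⟨0, by omega⟩))


namespace Udr

variable {n : ℕ} (π : Equiv.Perm (Fin n))

def D (i : ℕ) : Bool :=
  if h : 1 ≤ i ∧ i + 1 ≤ n then decide (π ⟨i, by omega⟩ < π ⟨i - 1, by omega⟩) else false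

lemma D_true {i : ℕ} (h1 : 1 ≤ i) (h2 : i + 1 ≤ n) :
    D π i = true ↔ π ⟨i, by omega⟩ < π ⟨i - 1, by omega⟩ := by
  simp [D, h1, h2]

lemma D_false {i : ℕ} (h1 : 1 ≤ i) (h2 : i + 1 ≤ n) :
    D π i = false ↔ π ⟨i - 1, by omega⟩ < π ⟨i, by omega⟩ := by
  have hne : π ⟨i - 1, by omega⟩ ≠ π ⟨i, by omega⟩ := by
    intro h
    have := π.injective h
    simp [Fin.ext_iff] at this
    omega
  rcases lt_or_gt_of_ne hne with h | h
  · simp [D, h1, h2, h, not_lt_of_gt h]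
  · simp [D, h1, h2, h, not_lt_of_gt h]

/-- If all comparisons in `[u, v)` are ascents, the values increase. -/
lemma run_asc {u v : ℕ} (hu : 1 ≤ u) (huv : u < v) (hv : v ≤ n)
    (h : ∀ i, u ≤ i → i < v → D π i = false) :
    π ⟨u - 1, by omega⟩ < π ⟨v - 1, by omega⟩ := by
  induction v with
  | zero => omega
  | succ w ih =>
    rcases Nat.lt_or_ge u w with hw | hw
    · have h1 : π ⟨u - 1, by omega⟩ < π ⟨w - 1, by omega⟩ :=
        ih (by omega) (by omega) (fun i hi1 hi2 => h i hi1 (by omega))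
      have h2 : π ⟨w - 1, by omega⟩ < π ⟨w, by omega⟩ :=
        (D_false π (by omega) (by omega)).mp (h w (by omega) (by omega))
      have : (⟨w, by omega⟩ : Fin n) = ⟨w + 1 - 1, by omega⟩ := by simp
      exact h1.trans (this ▸ h2)
    · have huw : u = w := by omega
      subst huw
      have h2 : π ⟨u - 1, by omega⟩ < π ⟨u, by omega⟩ :=
        (D_false π (by omega) (by omega)).mp (h u (by omega) (by omega))
      have : (⟨u, by omega⟩ : Fin n) = ⟨u + 1 - 1, by omega⟩ := by simp
      exact this ▸ h2

lemma run_desc {u v : ℕ} (hu : 1 ≤ u) (huv : u < v) (hv : v ≤ n)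
    (h : ∀ i, u ≤ i → i < v → D π i = true) :
    π ⟨v - 1, by omega⟩ < π ⟨u - 1, by omega⟩ := by
  induction v with
  | zero => omega
  | succ w ih =>
    rcases Nat.lt_or_ge u w with hw | hw
    · have h1 : π ⟨w - 1, by omega⟩ < π ⟨u - 1, by omega⟩ :=
        ih (by omega) (by omega) (fun i hi1 hi2 => h i hi1 (by omega))
      have h2 : π ⟨w, by omega⟩ < π ⟨w - 1, by omega⟩ :=
        (D_true π (by omega) (by omega)).mp (h w (by omega) (by omega))
      have : (⟨w, by omega⟩ : Fin n) = ⟨w + 1 - 1, by omega⟩ := by simp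
      exact (this ▸ h2).trans h1
    · have huw : u = w := by omega
      subst huw
      have h2 : π ⟨u, by omega⟩ < π ⟨u - 1, by omega⟩ :=
        (D_true π (by omega) (by omega)).mp (h u (by omega) (by omega))
      have : (⟨u, by omega⟩ : Fin n) = ⟨u + 1 - 1, by omega⟩ := by simp
      exact this ▸ h2

/-- If the value decreases over `[u,v]` there is a descent comparison in `[u,v)`. -/
lemma exists_desc {u v : ℕ} (hu : 1 ≤ u) (huv : u < v) (hv : v ≤ n)
    (h : π ⟨v - 1, by omega⟩ < π ⟨u - 1, by omega⟩) :
    ∃ i, u ≤ i ∧ i < v ∧ D π i = true := by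
  by_contra hc
  push_neg at hc
  have : ∀ i, u ≤ i → i < v → D π i = false := by
    intro i h1 h2
    have := hc i h1 h2
    simpa using this
  exact absurd (run_asc π hu huv hv this) (not_lt_of_gt h)

lemma exists_asc {u v : ℕ} (hu : 1 ≤ u) (huv : u < v) (hv : v ≤ n)
    (h : π ⟨u - 1, by omega⟩ < π ⟨v - 1, by omega⟩) :
    ∃ i, u ≤ i ∧ i < v ∧ D π i = false := by
  by_contra hc
  push_neg at hc
  have : ∀ i, u ≤ i → i < v → D π i = true := by
    intro i h1 h2
    have := hc i h1 h2
    simpa using this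
  exact absurd (run_desc π hu huv hv this) (not_lt_of_gt h)

/-- If the comparison sign differs between `u` and `v`, there is a change point in `(u, v]`. -/
lemma exists_chg {u v : ℕ} (huv : u ≤ v) (h : D π u ≠ D π v) :
    ∃ a, u < a ∧ a ≤ v ∧ D π (a - 1) ≠ D π a := by
  induction v with
  | zero =>
    have : u = 0 := by omega
    subst this; exact absurd rfl h
  | succ w ih =>
    rcases Nat.lt_or_ge u (w + 1) with hw | hw
    · by_cases hc : D π w = D π (w + 1)
      · obtain ⟨a, ha1, ha2, ha3⟩ := ih (by omega) (fun hh => h (hh.trans hc))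
        exact ⟨a, ha1, by omega, ha3⟩
      · exact ⟨w + 1, by omega, le_refl _, by simpa using hc⟩
    · have : u = w + 1 := by omega
      subst this; exact absurd rfl h


/-- the set of interior change points -/
def S : Finset ℕ := (Finset.Icc 2 (n-1)).filter (fun a => D π (a-1) ≠ D π a)

/-- the set of right endpoints of up-down runs -/
def B : Finset ℕ := if D π 1 then insert 1 (insert n (S π)) else insert n (S π)

lemma mem_S {a : ℕ} : a ∈ S π ↔ (2 ≤ a ∧ a ≤ n - 1 ∧ D π (a-1) ≠ D π a) := by
  simp [S, Finset.mem_filter, Finset.mem_Icc]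
  tauto

lemma mem_B {b : ℕ} (hn2 : 2 ≤ n) :
    b ∈ B π ↔ (b = 1 ∧ D π 1 = true) ∨ b = n ∨ b ∈ S π := by
  by_cases h : D π 1 = true
  · simp [B, h]
  · simp [B, h, Finset.mem_insert]

lemma card_B (hn2 : 2 ≤ n) :
    (B π).card = 1 + (S π).card + (if D π 1 then 1 else 0) := by
  have hnS : n ∉ S π := by
    rw [mem_S]; omega
  have h1S : (1 : ℕ) ∉ insert n (S π) := by
    simp [mem_S]; omega
  by_cases h : D π 1 = true
  · simp [B, h, Finset.card_insert_of_notMem, h1S, hnS]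
    omega
  · simp [B, h]
    rw [Finset.card_insert_of_notMem hnS]
    omega

/-- Characterization of biruns via D. -/
lemma birun_D {a b : ℕ} (h : IsBirun π a b) :
    1 ≤ a ∧ a < b ∧ b ≤ n ∧ (∀ i, a ≤ i → i < b → D π i = D π a) ∧
      (a = 1 ∨ D π (a-1) ≠ D π a) ∧ (b = n ∨ D π (b-1) ≠ D π b) := by
  obtain ⟨⟨ha, hab, hb⟩, hcase⟩ := h
  refine ⟨ha, hab, hb, ?_, ?_, ?_⟩
  · intro i hi1 hi2
    rcases hcase with ⟨hmono, _, _⟩ | ⟨hmono, _, _⟩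
    · rw [(D_false π (by omega) (by omega)).mpr (hmono i ⟨hi1, hi2⟩),
        (D_false π (by omega) (by omega)).mpr (hmono a ⟨le_refl _, hab⟩)]
    · rw [(D_true π (by omega) (by omega)).mpr (hmono i ⟨hi1, hi2⟩),
        (D_true π (by omega) (by omega)).mpr (hmono a ⟨le_refl _, hab⟩)]
  · rcases hcase with ⟨hmono, hL, _⟩ | ⟨hmono, hL, _⟩
    · rcases hL with h1 | ⟨ha2, hL⟩
      · exact Or.inl h1
      · refine Or.inr ?_
        have hDa : D π a = false := (D_false π (by omega) (by omega)).mpr (hmono a ⟨le_refl _, hab⟩)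
        have : π ⟨a - 1 - 1, by omega⟩ ≠ π ⟨a - 1, by omega⟩ := by
          intro hh; have := π.injective hh; simp [Fin.ext_iff] at this; omega
        have hlt : π ⟨a - 1, by omega⟩ < π ⟨a - 1 - 1, by omega⟩ := by
          rcases this.lt_or_gt with hc | hc
          · exfalso; apply hL
            have e1 : (⟨a - 1 - 1, by omega⟩ : Fin n) = ⟨a - 2, by omega⟩ := by
              simp; omega
            exact e1 ▸ hc
          · exact hc
        have hDa1 : D π (a-1) = true := (D_true π (by omega) (by omega)).mpr hlt
        rw [hDa1, hDa]; simp
    · rcases hL with h1 | ⟨ha2, hL⟩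
      · exact Or.inl h1
      · refine Or.inr ?_
        have hDa : D π a = true := (D_true π (by omega) (by omega)).mpr (hmono a ⟨le_refl _, hab⟩)
        have : π ⟨a - 1 - 1, by omega⟩ ≠ π ⟨a - 1, by omega⟩ := by
          intro hh; have := π.injective hh; simp [Fin.ext_iff] at this; omega
        have hlt : π ⟨a - 1 - 1, by omega⟩ < π ⟨a - 1, by omega⟩ := by
          rcases this.lt_or_gt with hc | hc
          · exact hc
          · exfalso; apply hL
            have e1 : (⟨a - 1 - 1, by omega⟩ : Fin n) = ⟨a - 2, by omega⟩ := by
              simp; omega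
            exact e1 ▸ hc
        have hDa1 : D π (a-1) = false := (D_false π (by omega) (by omega)).mpr hlt
        rw [hDa1, hDa]; simp
  · rcases hcase with ⟨hmono, _, hR⟩ | ⟨hmono, _, hR⟩
    · rcases hR with h1 | ⟨hb2, hR⟩
      · exact Or.inl h1
      · refine Or.inr ?_
        have hDb1 : D π (b-1) = false :=
          (D_false π (by omega) (by omega)).mpr (hmono (b-1) ⟨by omega, by omega⟩)
        have : π ⟨b - 1, by omega⟩ ≠ π ⟨b, by omega⟩ := by
          intro hh; have := π.injective hh; simp [Fin.ext_iff] at this; omega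
        have hlt : π ⟨b, by omega⟩ < π ⟨b - 1, by omega⟩ := by
          rcases this.lt_or_gt with hc | hc
          · exact absurd hc hR
          · exact hc
        have hDb : D π b = true := (D_true π (by omega) (by omega)).mpr hlt
        rw [hDb1, hDb]; simp
    · rcases hR with h1 | ⟨hb2, hR⟩
      · exact Or.inl h1
      · refine Or.inr ?_
        have hDb1 : D π (b-1) = true :=
          (D_true π (by omega) (by omega)).mpr (hmono (b-1) ⟨by omega, by omega⟩)
        have : π ⟨b - 1, by omega⟩ ≠ π ⟨b, by omega⟩ := by
          intro hh; have := π.injective hh; simp [Fin.ext_iff] at this; omega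
        have hlt : π ⟨b - 1, by omega⟩ < π ⟨b, by omega⟩ := by
          rcases this.lt_or_gt with hc | hc
          · exact hc
          · exact absurd hc hR
        have hDb : D π b = false := (D_false π (by omega) (by omega)).mpr hlt
        rw [hDb1, hDb]; simp


/-- Converse: build a birun from D-data. -/
lemma birun_of_D {a b : ℕ} (ha : 1 ≤ a) (hab : a < b) (hb : b ≤ n)
    (hconst : ∀ i, a ≤ i → i < b → D π i = D π a)
    (hL : a = 1 ∨ D π (a-1) ≠ D π a) (hR : b = n ∨ D π (b-1) ≠ D π b) :
    IsBirun π a b := by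
  refine ⟨⟨ha, hab, hb⟩, ?_⟩
  have hDb1 : D π (b-1) = D π a := hconst (b-1) (by omega) (by omega)
  by_cases hDa : D π a = true
  · -- descending run
    refine Or.inr ⟨?_, ?_, ?_⟩
    · intro i ⟨hi1, hi2⟩
      exact (D_true π (by omega) (by omega)).mp ((hconst i hi1 hi2).trans hDa)
    · by_cases ha1 : a = 1
      · exact Or.inl ha1
      · have hL : D π (a-1) ≠ D π a := hL.resolve_left ha1
        have ha2 : 2 ≤ a := by omega
        refine Or.inr ⟨ha2, ?_⟩
        have hD : D π (a-1) = false := by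
          cases hx : D π (a-1) with
          | false => rfl
          | true => exact absurd (hx.trans hDa.symm) hL
        have := (D_false π (by omega) (by omega)).mp hD
        have e1 : (⟨a - 1 - 1, by omega⟩ : Fin n) = ⟨a - 2, by omega⟩ := by
          simp [Fin.ext_iff]; omega
        exact not_lt_of_gt (e1 ▸ this)
    · by_cases hb1 : b = n
      · exact Or.inl hb1
      · have hR : D π (b-1) ≠ D π b := hR.resolve_left hb1
        have hb2 : b + 1 ≤ n := by omega
        refine Or.inr ⟨hb2, ?_⟩
        have hD : D π b = false := by
          cases hx : D π b with
          | false => rfl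
          | true => exact absurd (hDb1.trans (hDa.trans hx.symm)) hR
        have := (D_false π (by omega) (by omega)).mp hD
        exact not_lt_of_gt this
  · -- increasing run
    have hDa' : D π a = false := by
      cases hx : D π a with
      | false => rfl
      | true => exact absurd hx hDa
    refine Or.inl ⟨?_, ?_, ?_⟩
    · intro i ⟨hi1, hi2⟩
      exact (D_false π (by omega) (by omega)).mp ((hconst i hi1 hi2).trans hDa')
    · by_cases ha1 : a = 1
      · exact Or.inl ha1
      · have hL : D π (a-1) ≠ D π a := hL.resolve_left ha1
        have ha2 : 2 ≤ a := by omega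
        refine Or.inr ⟨ha2, ?_⟩
        have hD : D π (a-1) = true := by
          cases hx : D π (a-1) with
          | true => rfl
          | false => exact absurd (hx.trans hDa'.symm) hL
        have := (D_true π (by omega) (by omega)).mp hD
        have e1 : (⟨a - 1 - 1, by omega⟩ : Fin n) = ⟨a - 2, by omega⟩ := by
          simp [Fin.ext_iff]; omega
        exact not_lt_of_gt (e1 ▸ this)
    · by_cases hb1 : b = n
      · exact Or.inl hb1
      · have hR : D π (b-1) ≠ D π b := hR.resolve_left hb1
        have hb2 : b + 1 ≤ n := by omega
        refine Or.inr ⟨hb2, ?_⟩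
        have hD : D π b = true := by
          cases hx : D π b with
          | true => rfl
          | false => exact absurd (hDb1.trans (hDa'.trans hx.symm)) hR
        have := (D_true π (by omega) (by omega)).mp hD
        exact not_lt_of_gt this


lemma snd_mem_B {a b : ℕ} (hn2 : 2 ≤ n) (h : IsUpDownRun π a b) : b ∈ B π := by
  rcases h with h | ⟨ha, hb, hcond⟩
  · obtain ⟨ha, hab, hbn, hconst, hL, hR⟩ := birun_D π h
    rcases hR with h1 | hR
    · rw [mem_B π hn2]; right; left; exact h1
    · by_cases hbeq : b = n
      · rw [mem_B π hn2]; right; left; exact hbeq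
      · rw [mem_B π hn2]; right; right
        rw [mem_S]
        exact ⟨by omega, by omega, hR⟩
  · subst ha hb
    rcases hcond with h1 | ⟨h2, hlt⟩
    · omega
    · rw [mem_B π hn2]
      left
      refine ⟨rfl, ?_⟩
      rw [D_true π (by omega) (by omega)]
      exact hlt

lemma run_unique {a1 a2 b : ℕ} (h1 : IsUpDownRun π a1 b) (h2 : IsUpDownRun π a2 b) :
    a1 = a2 := by
  have key : ∀ x y : ℕ, IsBirun π x b → IsBirun π y b → x < y → False := by
    intro x y hx hy hxy
    obtain ⟨hx1, hxb, hbn, hconst, _, _⟩ := birun_D π hx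
    obtain ⟨hy1, hyb, _, _, hL, _⟩ := birun_D π hy
    have hy1' : y ≠ 1 := by omega
    have hL' : D π (y-1) ≠ D π y := hL.resolve_left hy1'
    have e1 : D π (y-1) = D π x := hconst (y-1) (by omega) (by omega)
    have e2 : D π y = D π x := hconst y (by omega) (by omega)
    exact hL' (e1.trans e2.symm)
  have hb1 : ∀ x : ℕ, IsBirun π x b → 2 ≤ b := by
    intro x hx
    obtain ⟨⟨h1, h2, h3⟩, _⟩ := hx
    omega
  rcases h1 with h1 | ⟨ha1, hb1', _⟩
  · rcases h2 with h2 | ⟨ha2, hb2', _⟩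
    · rcases lt_trichotomy a1 a2 with h | h | h
      · exact absurd (key a1 a2 h1 h2 h) not_false
      · exact h
      · exact absurd (key a2 a1 h2 h1 h) not_false
    · subst hb2'
      have := hb1 a1 h1
      omega
  · rcases h2 with h2 | ⟨ha2, hb2', _⟩
    · subst hb1'
      have := hb1 a2 h2
      omega
    · rw [ha1, ha2]

lemma exists_run {b : ℕ} (hn2 : 2 ≤ n) (hb : b ∈ B π) : ∃ a, IsUpDownRun π a b := by
  rw [mem_B π hn2] at hb
  rcases hb with ⟨hb1, hD1⟩ | hb
  · subst hb1
    refine ⟨1, Or.inr ⟨rfl, rfl, Or.inr ⟨hn2, ?_⟩⟩⟩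
    have := (D_true π (by omega) (by omega)).mp hD1
    convert this using 2
  · have hb2 : 2 ≤ b ∧ b ≤ n := by
      rcases hb with h | h
      · omega
      · rw [mem_S] at h; omega
    set A : Finset ℕ := (Finset.Icc 1 (b-1)).filter (fun a => a = 1 ∨ D π (a-1) ≠ D π a) with hA
    have hA1 : (1 : ℕ) ∈ A := by
      simp [hA, Finset.mem_filter, Finset.mem_Icc]
      omega
    have hAne : A.Nonempty := ⟨1, hA1⟩
    set a0 := A.max' hAne with ha0def
    have ha0A : a0 ∈ A := A.max'_mem hAne
    have ha0 : 1 ≤ a0 ∧ a0 ≤ b - 1 ∧ (a0 = 1 ∨ D π (a0-1) ≠ D π a0) := by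
      have := ha0A
      simp [hA, Finset.mem_filter, Finset.mem_Icc] at this
      tauto
    have hconst : ∀ i, a0 ≤ i → i < b → D π i = D π a0 := by
      intro i hi1 hi2
      induction i with
      | zero => omega
      | succ j ih =>
        rcases Nat.lt_or_ge j a0 with hj | hj
        · have : a0 = j + 1 := by omega
          rw [this]
        · have hDeq : D π (j+1) = D π j := by
            by_contra hne
            have hmem : j + 1 ∈ A := by
              simp [hA, Finset.mem_filter, Finset.mem_Icc]
              constructor
              · omega
              · right; simpa using fun hh => hne hh.symm
            have := A.le_max' _ hmem
            omega
          rw [hDeq]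
          exact ih (by omega) (by omega)
    refine ⟨a0, Or.inl (birun_of_D π (by omega) (by omega) (by omega) hconst ha0.2.2 ?_)⟩
    rcases hb with h | h
    · exact Or.inl h
    · rw [mem_S] at h
      exact Or.inr h.2.2

theorem card_runs (hn2 : 2 ≤ n) :
    Nat.card {p : ℕ × ℕ // IsUpDownRun π p.1 p.2} = (B π).card := by
  have hbij : Set.BijOn Prod.snd {p : ℕ × ℕ | IsUpDownRun π p.1 p.2} ↑(B π) := by
    refine ⟨?_, ?_, ?_⟩
    · intro p hp
      exact snd_mem_B π hn2 hp
    · intro p hp q hq hpq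
      have := run_unique π hp (show IsUpDownRun π q.1 p.2 by rw [hpq]; exact hq)
      exact Prod.ext this hpq
    · intro b hb
      obtain ⟨a, ha⟩ := exists_run π hn2 hb
      exact ⟨(a, b), ha, rfl⟩
  calc Nat.card {p : ℕ × ℕ // IsUpDownRun π p.1 p.2}
      = Set.ncard {p : ℕ × ℕ | IsUpDownRun π p.1 p.2} := Nat.card_coe_set_eq _
    _ = Set.ncard (Prod.snd '' {p : ℕ × ℕ | IsUpDownRun π p.1 p.2}) :=
        (Set.ncard_image_of_injOn hbij.injOn).symm
    _ = (B π).card := by rw [hbij.image_eq]; exact Set.ncard_coe_finset _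


/-- sorted list of right endpoints -/
def L : List ℕ := (B π).sort (· ≤ ·)

lemma L_strict : StrictMono (L π).get :=
  (Finset.sortedLT_sort (B π)).strictMono_get

lemma L_mem (j : Fin (L π).length) : (L π).get j ∈ B π :=
  (Finset.mem_sort (α := ℕ) (· ≤ ·)).mp (List.get_mem (L π) j)

lemma B_bounds (hn2 : 2 ≤ n) {b : ℕ} (hb : b ∈ B π) : 1 ≤ b ∧ b ≤ n := by
  rw [mem_B π hn2] at hb
  rcases hb with ⟨h, _⟩ | h | h
  · omega
  · omega
  · rw [mem_S] at h; omega

lemma no_below {x : ℕ} (hx : x ∈ B π) (h0 : 0 < (L π).length)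
    (h : x < (L π).get ⟨0, h0⟩) : False := by
  have hx' : x ∈ L π := (Finset.mem_sort (α := ℕ) (· ≤ ·)).mpr hx
  obtain ⟨m, hm⟩ := List.mem_iff_get.mp hx'
  have hmono := (L_strict π).monotone (show (⟨0, h0⟩ : Fin (L π).length) ≤ m from by
    simp [Fin.le_def])
  omega

lemma no_between {j : ℕ} (hj : j + 1 < (L π).length) {x : ℕ} (hx : x ∈ B π)
    (h1 : (L π).get ⟨j, by omega⟩ < x) (h2 : x < (L π).get ⟨j+1, hj⟩) : False := by
  have hx' : x ∈ L π := (Finset.mem_sort (α := ℕ) (· ≤ ·)).mpr hx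
  obtain ⟨m, hm⟩ := List.mem_iff_get.mp hx'
  rw [← hm] at h1 h2
  have e1 := (L_strict π).lt_iff_lt.mp h1
  have e2 := (L_strict π).lt_iff_lt.mp h2
  simp [Fin.lt_def] at e1 e2
  omega

lemma gap_const (hn2 : 2 ≤ n) {j : ℕ} (hj : j + 1 < (L π).length) :
    ∀ i, (L π).get ⟨j, by omega⟩ ≤ i → i < (L π).get ⟨j+1, hj⟩ →
      D π i = D π ((L π).get ⟨j, by omega⟩) := by
  have hLj := B_bounds π hn2 (L_mem π ⟨j, by omega⟩)
  have hLj1 := B_bounds π hn2 (L_mem π ⟨j+1, hj⟩)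
  intro i hi1 hi2
  induction i with
  | zero => omega
  | succ m ih =>
    rcases Nat.lt_or_ge m ((L π).get ⟨j, by omega⟩) with hm | hm
    · have : (L π).get ⟨j, by omega⟩ = m + 1 := by omega
      rw [this]
    · have hDeq : D π (m+1) = D π m := by
        by_contra hne
        have hmem : m + 1 ∈ B π := by
          rw [mem_B π hn2]; right; right
          rw [mem_S]
          refine ⟨by omega, by omega, by simpa using fun hh => hne hh.symm⟩
        exact no_between π hj hmem (by omega) (by omega)
      rw [hDeq]
      exact ih (by omega) (by omega)

lemma L_lt_n {j : ℕ} (hj : j + 1 < (L π).length) (hn2 : 2 ≤ n) :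
    (L π).get ⟨j, by omega⟩ < n := by
  have h1 : (L π).get ⟨j, by omega⟩ < (L π).get ⟨j+1, hj⟩ :=
    L_strict π (show (⟨j, by omega⟩ : Fin (L π).length) < ⟨j+1, hj⟩ from by
      simp [Fin.lt_def])
  have h2 := B_bounds π hn2 (L_mem π ⟨j+1, hj⟩)
  omega

lemma parity (hn2 : 2 ≤ n) : ∀ j, (hj : j + 1 < (L π).length) →
    (D π ((L π).get ⟨j, by omega⟩) = true ↔ j % 2 = 0) := by
  intro j
  induction j using Nat.strong_induction_on with
  | _ j IH =>
    intro hj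
    set x := (L π).get ⟨j, by omega⟩ with hx
    have hxB : x ∈ B π := L_mem π _
    have hxn : x < n := L_lt_n π hj hn2
    have hxb := B_bounds π hn2 hxB
    rw [mem_B π hn2] at hxB
    rcases hxB with ⟨hx1, hD1⟩ | hxn' | hxS
    · -- x = 1, D 1 = true; then j = 0
      have hj0 : j = 0 := by
        by_contra hj0
        have h0 : (L π).get ⟨0, by omega⟩ < x :=
          L_strict π (show (⟨0, by omega⟩ : Fin (L π).length) < ⟨j, by omega⟩ from by
            simp [Fin.lt_def]; omega)
        have := B_bounds π hn2 (L_mem π ⟨0, by omega⟩)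
        omega
      rw [hx1, hD1, hj0]
      simp
    · omega
    · rw [mem_S] at hxS
      obtain ⟨hx2, hxn1, hchg⟩ := hxS
      rcases Nat.eq_zero_or_pos j with hj0 | hjpos
      · -- j = 0 : all of [1, x) is constant ascent
        subst hj0
        have hD1 : D π 1 = false := by
          cases hD : D π 1 with
          | false => rfl
          | true =>
            have h1B : (1 : ℕ) ∈ B π := by rw [mem_B π hn2]; left; exact ⟨rfl, hD⟩
            exact absurd (no_below π h1B (by omega) (by omega)) not_false
        have hlow : ∀ i, 1 ≤ i → i < x → D π i = false := by
          intro i hi1 hi2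
          induction i with
          | zero => omega
          | succ m ih =>
            rcases Nat.lt_or_ge m 1 with hm | hm
            · have : m + 1 = 1 := by omega
              rw [this, hD1]
            · have hDeq : D π (m+1) = D π m := by
                by_contra hne
                have hmem : m + 1 ∈ B π := by
                  rw [mem_B π hn2]; right; right
                  rw [mem_S]
                  refine ⟨by omega, by omega, by simpa using fun hh => hne hh.symm⟩
                exact no_below π hmem (by omega) (by omega)
              rw [hDeq]
              exact ih (by omega) (by omega)
        have hDx1 : D π (x - 1) = false := by
          rcases Nat.eq_or_lt_of_le hx2 with h2 | h2
          · rw [← h2]; exact hD1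
          · exact hlow (x-1) (by omega) (by omega)
        have : D π x = true := by
          cases hD : D π x with
          | true => rfl
          | false => rw [hDx1, hD] at hchg; exact absurd rfl hchg
        rw [this]; simp
      · -- j = m + 1
        obtain ⟨m, rfl⟩ : ∃ m, j = m + 1 := ⟨j - 1, by omega⟩
        have hm1 : m + 1 < (L π).length := by omega
        have hprev := IH m (by omega) hm1
        have hLm := B_bounds π hn2 (L_mem π ⟨m, by omega⟩)
        have hmlt : (L π).get ⟨m, by omega⟩ < x :=
          L_strict π (show (⟨m, by omega⟩ : Fin (L π).length) < ⟨m+1, by omega⟩ from by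
            simp [Fin.lt_def])
        have hconst := gap_const π hn2 hm1 (x - 1) (by omega) (by omega)
        have hDx1 : D π (x-1) = D π ((L π).get ⟨m, by omega⟩) := hconst
        constructor
        · intro hDx
          by_contra hpar
          have hmpar : m % 2 = 0 := by omega
          have : D π ((L π).get ⟨m, by omega⟩) = true := hprev.mpr hmpar
          rw [hDx, hDx1, this] at hchg
          exact hchg rfl
        · intro hpar
          have hmpar : ¬ (m % 2 = 0) := by omega
          have hDm : D π ((L π).get ⟨m, by omega⟩) = false := by
            cases hD : D π ((L π).get ⟨m, by omega⟩) with
            | false => rfl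
            | true => exact absurd (hprev.mp hD) hmpar
          cases hD : D π x with
          | true => rfl
          | false =>
            rw [hD, hDx1, hDm] at hchg
            exact absurd rfl hchg


theorem mem_altset (hn2 : 2 ≤ n) :
    ∃ s : Fin ((B π).card) → Fin n, StrictMono s ∧
      ∀ (j : ℕ) (hj : j + 1 < (B π).card),
        if j % 2 = 0 then π (s ⟨j + 1, hj⟩) < π (s ⟨j, Nat.lt_of_succ_lt hj⟩)
        else π (s ⟨j, Nat.lt_of_succ_lt hj⟩) < π (s ⟨j + 1, hj⟩) := by
  have hlen : (L π).length = (B π).card := Finset.length_sort _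
  have hbnd : ∀ (m : Fin (L π).length), 1 ≤ (L π).get m ∧ (L π).get m ≤ n :=
    fun m => B_bounds π hn2 (L_mem π m)
  refine ⟨fun j => ⟨(L π).get ⟨j.val, by omega⟩ - 1,
      by have := hbnd ⟨j.val, by omega⟩; omega⟩, ?_, ?_⟩
  · intro a b hab
    have h1 := L_strict π (a := ⟨a.val, by omega⟩) (b := ⟨b.val, by omega⟩)
      (by rw [Fin.mk_lt_mk]; exact Fin.lt_def.mp hab)
    have h2 := hbnd ⟨a.val, by omega⟩
    rw [Fin.lt_def]
    exact Nat.sub_lt_sub_right h2.1 h1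
  · intro j hj
    have hj' : j + 1 < (L π).length := by omega
    have hpar := parity π hn2 j hj'
    have hconst := gap_const π hn2 hj'
    have hlt : (L π).get ⟨j, by omega⟩ < (L π).get ⟨j+1, hj'⟩ :=
      L_strict π (show (⟨j, by omega⟩ : Fin (L π).length) < ⟨j+1, hj'⟩ from by
        simp [Fin.lt_def])
    by_cases hp : j % 2 = 0
    · rw [if_pos hp]
      have hD : D π ((L π).get ⟨j, by omega⟩) = true := hpar.mpr hp
      have hrun := run_desc π (u := (L π).get ⟨j, by omega⟩) (v := (L π).get ⟨j+1, hj'⟩)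
        (hbnd ⟨j, by omega⟩).1 hlt (hbnd ⟨j+1, hj'⟩).2
        (fun i h1 h2 => (hconst i h1 h2).trans hD)
      exact hrun
    · rw [if_neg hp]
      have hD : D π ((L π).get ⟨j, by omega⟩) = false := by
        cases h : D π ((L π).get ⟨j, by omega⟩) with
        | false => rfl
        | true => exact absurd (hpar.mp h) hp
      have hrun := run_asc π (u := (L π).get ⟨j, by omega⟩) (v := (L π).get ⟨j+1, hj'⟩)
        (hbnd ⟨j, by omega⟩).1 hlt (hbnd ⟨j+1, hj'⟩).2
        (fun i h1 h2 => (hconst i h1 h2).trans hD)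
      exact hrun


theorem alt_le (hn2 : 2 ≤ n) {k : ℕ} (s : Fin k → Fin n) (hs : StrictMono s)
    (halt : ∀ (j : ℕ) (hj : j + 1 < k),
      if j % 2 = 0 then π (s ⟨j + 1, hj⟩) < π (s ⟨j, Nat.lt_of_succ_lt hj⟩)
      else π (s ⟨j, Nat.lt_of_succ_lt hj⟩) < π (s ⟨j + 1, hj⟩)) :
    k ≤ (B π).card := by
  have hBpos : 1 ≤ (B π).card :=
    Finset.card_pos.mpr ⟨n, by rw [mem_B π hn2]; right; left; rfl⟩
  rcases Nat.lt_or_ge k 2 with hk | hk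
  · omega
  -- positions, 1-indexed
  have hPdef : ∀ (j : ℕ) (h : j < k) (h' : j < k), (s ⟨j, h⟩).val = (s ⟨j, h'⟩).val :=
    fun _ _ _ => rfl
  set P : ℕ → ℕ := fun j => if h : j < k then (s ⟨j, h⟩).val + 1 else 0 with hPd
  have hP : ∀ (j : ℕ) (h : j < k), P j = (s ⟨j, h⟩).val + 1 := fun j h => dif_pos h
  have hP1 : ∀ (j : ℕ), j < k → 1 ≤ P j ∧ P j ≤ n := by
    intro j h
    rw [hP j h]
    have := (s ⟨j, h⟩).isLt
    omega
  have hPmono : ∀ i j : ℕ, i < j → j < k → P i < P j := by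
    intro i j hij hj
    rw [hP i (by omega), hP j hj]
    have := hs (a := ⟨i, by omega⟩) (b := ⟨j, hj⟩) (by rw [Fin.mk_lt_mk]; omega)
    have := Fin.lt_def.mp this
    omega
  -- comparisons with prescribed signs between consecutive selected positions
  have hq : ∀ (j : ℕ) (hj : j + 1 < k),
      ∃ i, P j ≤ i ∧ i < P (j+1) ∧ D π i = decide (j % 2 = 0) := by
    intro j hj
    have hjk : j < k := Nat.lt_of_succ_lt hj
    have hlt' : (s ⟨j, hjk⟩).val < (s ⟨j+1, hj⟩).val :=
      Fin.lt_def.mp (hs (by rw [Fin.mk_lt_mk]; omega))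
    have hnb := (s ⟨j+1, hj⟩).isLt
    have halt' := halt j hj
    by_cases hp : j % 2 = 0
    · rw [if_pos hp] at halt'
      obtain ⟨i, hi1, hi2, hi3⟩ := exists_desc π (u := (s ⟨j, hjk⟩).val + 1)
        (v := (s ⟨j+1, hj⟩).val + 1) (by omega) (by omega) (by omega) halt'
      refine ⟨i, ?_, ?_, by simp [hp, hi3]⟩
      · rw [hP j hjk]; exact hi1
      · rw [hP (j+1) hj]; exact hi2
    · rw [if_neg hp] at halt'
      obtain ⟨i, hi1, hi2, hi3⟩ := exists_asc π (u := (s ⟨j, hjk⟩).val + 1)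
        (v := (s ⟨j+1, hj⟩).val + 1) (by omega) (by omega) (by omega) halt'
      refine ⟨i, ?_, ?_, by simp [hp, hi3]⟩
      · rw [hP j hjk]; exact hi1
      · rw [hP (j+1) hj]; exact hi2
  choose q hq1 hq2 hq3 using hq
  set Q : ℕ → ℕ := fun j => if h : j + 1 < k then q j h else 0 with hQd
  have hQ : ∀ (j : ℕ) (h : j + 1 < k), Q j = q j h := fun j h => dif_pos h
  have hQ1 : ∀ (j : ℕ) (h : j + 1 < k), P j ≤ Q j := by
    intro j h; rw [hQ j h]; exact hq1 j h
  have hQ2 : ∀ (j : ℕ) (h : j + 1 < k), Q j < P (j+1) := by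
    intro j h; rw [hQ j h]; exact hq2 j h
  have hQ3 : ∀ (j : ℕ) (h : j + 1 < k), D π (Q j) = decide (j % 2 = 0) := by
    intro j h; rw [hQ j h]; exact hq3 j h
  have hQle : ∀ i j : ℕ, i ≤ j → j + 1 < k → Q i ≤ Q j := by
    intro i j hij hj
    induction j with
    | zero =>
      have : i = 0 := by omega
      rw [this]
    | succ m ih =>
      rcases Nat.eq_or_lt_of_le hij with h1 | h1
      · rw [h1]
      · have h2 : Q m < P (m+1) := hQ2 m (by omega)
        have h3 : P (m+1) ≤ Q (m+1) := hQ1 (m+1) hj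
        have h4 : Q i ≤ Q m := ih (by omega) (by omega)
        omega
  have hQbnd : ∀ (j : ℕ) (h : j + 1 < k), 1 ≤ Q j ∧ Q j ≤ n - 1 := by
    intro j h
    have h1 := hQ1 j h
    have h2 := hQ2 j h
    have h3 := hP1 j (by omega)
    have h4 := hP1 (j+1) h
    omega
  -- change points between consecutive comparison witnesses
  have hcex : ∀ (j : ℕ) (hj : j + 2 < k),
      ∃ a, Q j < a ∧ a ≤ Q (j+1) ∧ a ∈ S π := by
    intro j hj
    have hd : D π (Q j) ≠ D π (Q (j+1)) := by
      rw [hQ3 j (by omega), hQ3 (j+1) (by omega)]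
      by_cases hp : j % 2 = 0
      · have hp' : ¬ ((j+1) % 2 = 0) := by omega
        simp [hp, hp']
      · have hp' : (j+1) % 2 = 0 := by omega
        simp [hp, hp']
    obtain ⟨a, ha1, ha2, ha3⟩ := exists_chg π (hQle j (j+1) (by omega) (by omega)) hd
    refine ⟨a, ha1, ha2, ?_⟩
    rw [mem_S]
    have hb1 := hQbnd j (by omega)
    have hb2 := hQbnd (j+1) (by omega)
    exact ⟨by omega, by omega, ha3⟩
  choose c hc1 hc2 hc3 using hcex
  set C : ℕ → ℕ := fun j => if h : j + 2 < k then c j h else 0 with hCd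
  have hC1 : ∀ (j : ℕ) (h : j + 2 < k), Q j < C j := by
    intro j h; have : C j = c j h := dif_pos h; rw [this]; exact hc1 j h
  have hC2 : ∀ (j : ℕ) (h : j + 2 < k), C j ≤ Q (j+1) := by
    intro j h; have : C j = c j h := dif_pos h; rw [this]; exact hc2 j h
  have hC3 : ∀ (j : ℕ) (h : j + 2 < k), C j ∈ S π := by
    intro j h; have : C j = c j h := dif_pos h; rw [this]; exact hc3 j h
  have hCmono : ∀ i j : ℕ, i < j → j + 2 < k → C i < C j := by
    intro i j hij hj
    have h1 : C i ≤ Q (i+1) := hC2 i (by omega)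
    have h2 : Q (i+1) ≤ Q j := hQle (i+1) j (by omega) (by omega)
    have h3 : Q j < C j := hC1 j hj
    omega
  by_cases hD1 : D π 1 = true
  · -- B.card = S.card + 2
    have hcard : (B π).card = 1 + (S π).card + 1 := by rw [card_B π hn2, if_pos hD1]
    have hle : k - 2 ≤ (S π).card := by
      have := Finset.card_le_card_of_injOn (s := Finset.range (k-2)) (t := S π) C
        (fun j hj => hC3 j (by simp only [Finset.coe_range, Set.mem_Iio] at hj; omega))
        (by
          intro i hi j hj hij
          simp only [Finset.coe_range, Set.mem_Iio] at hi hj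
          by_contra hne
          rcases lt_trichotomy i j with h | h | h
          · exact absurd hij (Nat.ne_of_lt (hCmono i j h (by omega)))
          · exact hne h
          · exact absurd hij.symm (Nat.ne_of_lt (hCmono j i h (by omega))))
      rw [Finset.card_range] at this
      exact this
    omega
  · -- B.card = S.card + 1 ; need one extra change point below Q 0
    have hcard : (B π).card = 1 + (S π).card := by
      rw [card_B π hn2, if_neg hD1]
      omega
    have hQ0 := hQbnd 0 (by omega)
    have hd0 : D π 1 ≠ D π (Q 0) := by
      rw [hQ3 0 (by omega)]
      simp only [Bool.not_eq_true] at hD1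
      rw [hD1]
      simp
    have ha0 := exists_chg π (show 1 ≤ Q 0 by omega) hd0
    obtain ⟨a0, ha01, ha02, ha03⟩ := ha0
    have ha0S : a0 ∈ S π := by
      rw [mem_S]
      exact ⟨by omega, by omega, ha03⟩
    have hfmono : ∀ i j : ℕ, i < j → j < k - 1 →
        (if i = 0 then a0 else C (i-1)) < (if j = 0 then a0 else C (j-1)) := by
      intro i j hij hj
      rw [if_neg (show j ≠ 0 by omega)]
      rcases Nat.eq_zero_or_pos i with hi0 | hi0
      · rw [if_pos hi0]
        have h1 : Q 0 ≤ Q (j-1) := hQle 0 (j-1) (by omega) (by omega)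
        have h2 : Q (j-1) < C (j-1) := hC1 (j-1) (by omega)
        omega
      · rw [if_neg (show i ≠ 0 by omega)]
        exact hCmono (i-1) (j-1) (by omega) (by omega)
    have hle : k - 1 ≤ (S π).card := by
      have hcl := Finset.card_le_card_of_injOn (s := Finset.range (k-1)) (t := S π)
        (fun j => if j = 0 then a0 else C (j - 1))
        (fun j hj => by
          simp only [Finset.coe_range, Set.mem_Iio] at hj
          show (if j = 0 then a0 else C (j - 1)) ∈ S π
          rcases Nat.eq_zero_or_pos j with h0 | h0
          · rw [h0, if_pos rfl]; exact ha0S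
          · rw [if_neg (show j ≠ 0 by omega)]
            exact hC3 (j-1) (by omega))
        (by
          intro i hi j hj hij
          simp only [Finset.coe_range, Set.mem_Iio] at hi hj
          by_contra hne
          rcases lt_trichotomy i j with h | h | h
          · exact absurd hij (Nat.ne_of_lt (hfmono i j h hj))
          · exact hne h
          · exact absurd hij.symm (Nat.ne_of_lt (hfmono j i h hi)))
      rw [Finset.card_range] at hcl
      exact hcl
    omega

end Udr

theorem stmt11 (n : ℕ) (hn : 1 ≤ n) (π : Equiv.Perm (Fin n)) :
    Nat.card {p : ℕ × ℕ // IsUpDownRun π p.1 p.2} =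
      sSup {k : ℕ | ∃ s : Fin k → Fin n, StrictMono s ∧
        ∀ (j : ℕ) (hj : j + 1 < k),
          if j % 2 = 0 then π (s ⟨j + 1, hj⟩) < π (s ⟨j, by omega⟩)
          else π (s ⟨j, by omega⟩) < π (s ⟨j + 1, hj⟩)} := by
  rcases Nat.lt_or_ge n 2 with hn1 | hn2
  · -- n = 1
    have hn1' : n = 1 := by omega
    subst hn1'
    have hset : {p : ℕ × ℕ | IsUpDownRun π p.1 p.2} = {((1:ℕ), (1:ℕ))} := by
      ext ⟨a, b⟩
      simp only [Set.mem_setOf_eq, Set.mem_singleton_iff, Prod.mk.injEq]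
      constructor
      · rintro (⟨⟨h1', h2', h3'⟩, _⟩ | ⟨ha, hb, _⟩)
        · omega
        · exact ⟨ha, hb⟩
      · rintro ⟨rfl, rfl⟩
        exact Or.inr ⟨rfl, rfl, Or.inl rfl⟩
    have hL : Nat.card {p : ℕ × ℕ // IsUpDownRun π p.1 p.2} = 1 := by
      calc Nat.card {p : ℕ × ℕ // IsUpDownRun π p.1 p.2}
          = Set.ncard {p : ℕ × ℕ | IsUpDownRun π p.1 p.2} := Nat.card_coe_set_eq _
        _ = 1 := by rw [hset]; exact Set.ncard_singleton _
    rw [hL]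
    have hub : ∀ k ∈ {k : ℕ | ∃ s : Fin k → Fin 1, StrictMono s ∧
        ∀ (j : ℕ) (hj : j + 1 < k),
          if j % 2 = 0 then π (s ⟨j + 1, hj⟩) < π (s ⟨j, by omega⟩)
          else π (s ⟨j, by omega⟩) < π (s ⟨j + 1, hj⟩)}, k ≤ 1 := by
      intro k hk
      obtain ⟨s, hs, _⟩ := hk
      calc k = Fintype.card (Fin k) := (Fintype.card_fin k).symm
        _ ≤ Fintype.card (Fin 1) := Fintype.card_le_of_injective s hs.injective
        _ = 1 := Fintype.card_fin 1
    have hmem : 1 ∈ {k : ℕ | ∃ s : Fin k → Fin 1, StrictMono s ∧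
        ∀ (j : ℕ) (hj : j + 1 < k),
          if j % 2 = 0 then π (s ⟨j + 1, hj⟩) < π (s ⟨j, by omega⟩)
          else π (s ⟨j, by omega⟩) < π (s ⟨j + 1, hj⟩)} := by
      refine ⟨fun _ => ⟨0, by omega⟩, ?_, ?_⟩
      · intro a b hab
        have h1 := a.isLt
        have h2 := b.isLt
        have := Fin.lt_def.mp hab
        omega
      · intro j hj
        exact absurd hj (by omega)
    exact le_antisymm (le_csSup ⟨1, hub⟩ hmem) (csSup_le ⟨1, hmem⟩ hub)
  · rw [Udr.card_runs π hn2]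
    have hub : ∀ k ∈ {k : ℕ | ∃ s : Fin k → Fin n, StrictMono s ∧
        ∀ (j : ℕ) (hj : j + 1 < k),
          if j % 2 = 0 then π (s ⟨j + 1, hj⟩) < π (s ⟨j, by omega⟩)
          else π (s ⟨j, by omega⟩) < π (s ⟨j + 1, hj⟩)}, k ≤ (Udr.B π).card := by
      intro k hk
      obtain ⟨s, hs, ha⟩ := hk
      exact Udr.alt_le π hn2 s hs ha
    have hmem : (Udr.B π).card ∈ {k : ℕ | ∃ s : Fin k → Fin n, StrictMono s ∧
        ∀ (j : ℕ) (hj : j + 1 < k),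
          if j % 2 = 0 then π (s ⟨j + 1, hj⟩) < π (s ⟨j, by omega⟩)
          else π (s ⟨j, by omega⟩) < π (s ⟨j + 1, hj⟩)} := Udr.mem_altset π hn2
    exact le_antisymm (le_csSup ⟨_, hub⟩ hmem) (csSup_le ⟨_, hmem⟩ hub)
end
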